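/- arXiv:2006.10311 — 5 statements merged into one kernel-verified Lean document; each statement's English description precedes it below -/
import Mathlib

section
/- Assume f is L-smooth, ζ-quasar-convex with respect to x*, g satisfies the Expected Residual condition with constant ρ and gradient noise σ². For SGD x^{k+1} = x^k - γ g(x^k) with constant step size γ = ζ/(2(2ρ + L)), the minimum over t < k of E[f(x^t) - f(x*)] is at most 2‖x^0 - x*‖²(2ρ + L)/(ζ² k) + σ²/(2ρ + L). -/
open scoped RealInnerProductSpace
open Finset

lemma sq_expand' {E : Type*} [NormedAddCommGroup E] [InnerProductSpace ℝ E]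
    (v u : E) (γ : ℝ) :
    ‖v - γ • u‖ ^ 2 = ‖v‖ ^ 2 - 2 * γ * ⟪u, v⟫ + γ ^ 2 * ‖u‖ ^ 2 := by
  rw [norm_sub_sq_real, real_inner_smul_right, norm_smul, real_inner_comm]
  simp [mul_pow, sq_abs]
  ring

lemma two_sq' {E : Type*} [NormedAddCommGroup E] [InnerProductSpace ℝ E] (a b : E) :
    ‖a + b‖ ^ 2 ≤ 2 * ‖a‖ ^ 2 + 2 * ‖b‖ ^ 2 := by
  have h := norm_add_le a b
  have h2 := mul_self_le_mul_self (norm_nonneg (a + b)) h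
  nlinarith [sq_nonneg (‖a‖ - ‖b‖)]

lemma grad_sq_le' {E : Type*} [NormedAddCommGroup E] [InnerProductSpace ℝ E]
    (f : E → ℝ) (gradf : E → E) (L : ℝ) (hL : 0 < L) (xstar : E)
    (hsmooth : ∀ x z : E, f z ≤ f x + ⟪gradf x, z - x⟫ + L / 2 * ‖z - x‖ ^ 2)
    (hmin : ∀ x, f xstar ≤ f x) :
    ∀ y, ‖gradf y‖ ^ 2 ≤ 2 * L * (f y - f xstar) := by
  intro y
  have h := hsmooth y (y - L⁻¹ • gradf y)
  have hm := hmin (y - L⁻¹ • gradf y)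
  have h1 : (y - L⁻¹ • gradf y) - y = -(L⁻¹ • gradf y) := by abel
  rw [h1, inner_neg_right, real_inner_smul_right, real_inner_self_eq_norm_sq,
    norm_neg, norm_smul] at h
  have h2 : ‖(L⁻¹ : ℝ)‖ = L⁻¹ := by
    rw [Real.norm_eq_abs, abs_of_pos (inv_pos.2 hL)]
  rw [h2] at h
  have h3 : L / 2 * (L⁻¹ * ‖gradf y‖) ^ 2 = L⁻¹ / 2 * ‖gradf y‖ ^ 2 := by
    field_simp
  rw [h3] at h
  have key : L⁻¹ / 2 * ‖gradf y‖ ^ 2 ≤ f y - f xstar := by linarith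
  calc ‖gradf y‖ ^ 2 = (2 * L) * (L⁻¹ / 2 * ‖gradf y‖ ^ 2) := by
        field_simp
    _ ≤ 2 * L * (f y - f xstar) := by
        apply mul_le_mul_of_nonneg_left key; positivity

/-- telescoping + minimum extraction -/
lemma telescope_min' (r d : ℕ → ℝ) (c e : ℝ) (hc : 0 < c)
    (hr0 : ∀ t, 0 ≤ r t) (hrec : ∀ t, r (t + 1) ≤ r t - c * d t + e) (k : ℕ) (hk : 0 < k) :
    ∃ t < k, d t ≤ r 0 / (c * k) + e / c := by
  have hsum : ∀ n : ℕ, c * (∑ t ∈ range n, d t) ≤ r 0 + n * e - r n := by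
    intro n
    induction n with
    | zero => simp
    | succ n ih =>
      rw [Finset.sum_range_succ]
      have h := hrec n
      push_cast
      nlinarith [ih, h]
  by_contra hcon
  push_neg at hcon
  have hk0 : (0 : ℝ) < k := by exact_mod_cast hk
  have hsum2 : (k : ℝ) * (r 0 / (c * k) + e / c) < ∑ t ∈ range k, d t := by
    have h := Finset.sum_lt_sum_of_nonempty (Finset.nonempty_range_iff.2 hk.ne')
      (fun t ht => hcon t (mem_range.1 ht))
    calc (k : ℝ) * (r 0 / (c * k) + e / c)
        = ∑ _t ∈ range k, (r 0 / (c * k) + e / c) := by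
          rw [Finset.sum_const, card_range, nsmul_eq_mul]
      _ < ∑ t ∈ range k, d t := h
  have heq : c * ((k : ℝ) * (r 0 / (c * k) + e / c)) = r 0 + k * e := by
    field_simp
  nlinarith [hr0 k, hsum k, mul_lt_mul_of_pos_left hsum2 hc]

lemma second_moment' {E : Type*} [NormedAddCommGroup E] [InnerProductSpace ℝ E]
    {ι : Type*} [Fintype ι] (p : ι → ℝ)
    (hp0 : ∀ i, 0 ≤ p i) (hp1 : ∑ i, p i = 1)
    (f : E → ℝ) (gradf : E → E) (g : ι → E → E) (L ρ σ2 : ℝ) (xstar : E)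
    (hgstar : gradf xstar = 0)
    (hgrad_sq : ∀ y, ‖gradf y‖ ^ 2 ≤ 2 * L * (f y - f xstar))
    (hunbiased : ∀ x : E, ∑ i, p i • g i x = gradf x)
    (hER : ∀ x : E, (∑ i, p i * ‖g i x - g i xstar - (gradf x - gradf xstar)‖ ^ 2) ≤
        2 * ρ * (f x - f xstar))
    (hσ : (∑ i, p i * ‖g i xstar‖ ^ 2) = σ2) :
    ∀ y, ∑ i, p i * ‖g i y‖ ^ 2 ≤ 2 * (2 * ρ + L) * (f y - f xstar) + 2 * σ2 := by
  intro y
  have hzero : ∑ i, p i • (g i y - gradf y) = 0 := by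
    simp only [smul_sub]
    rw [Finset.sum_sub_distrib, hunbiased, ← Finset.sum_smul, hp1, one_smul, sub_self]
  have expand : ∀ i, ‖g i y‖ ^ 2
      = ‖g i y - gradf y‖ ^ 2 + 2 * ⟪g i y - gradf y, gradf y⟫ + ‖gradf y‖ ^ 2 := by
    intro i
    have h : g i y = (g i y - gradf y) + gradf y := by abel
    conv_lhs => rw [h]
    exact norm_add_sq_real _ _
  have hsum : ∑ i, p i * ‖g i y‖ ^ 2
      = (∑ i, p i * ‖g i y - gradf y‖ ^ 2) + ‖gradf y‖ ^ 2 := by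
    have hc : ∑ i, p i * (2 * ⟪g i y - gradf y, gradf y⟫) = 0 := by
      have h1 : ∑ i, p i * (2 * ⟪g i y - gradf y, gradf y⟫)
          = 2 * ⟪∑ i, p i • (g i y - gradf y), gradf y⟫ := by
        rw [sum_inner, Finset.mul_sum]
        refine Finset.sum_congr rfl fun i _ => ?_
        rw [real_inner_smul_left]; ring
      rw [h1, hzero, inner_zero_left, mul_zero]
    calc ∑ i, p i * ‖g i y‖ ^ 2
        = ∑ i, (p i * ‖g i y - gradf y‖ ^ 2 + p i * (2 * ⟪g i y - gradf y, gradf y⟫)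
            + p i * ‖gradf y‖ ^ 2) := by
          refine Finset.sum_congr rfl fun i _ => ?_
          rw [expand i]; ring
      _ = (∑ i, p i * ‖g i y - gradf y‖ ^ 2) + (∑ i, p i * (2 * ⟪g i y - gradf y, gradf y⟫))
            + (∑ i, p i * ‖gradf y‖ ^ 2) := by
          rw [Finset.sum_add_distrib, Finset.sum_add_distrib]
      _ = _ := by
          rw [hc, ← Finset.sum_mul, hp1, one_mul, add_zero]
  have hbound : ∑ i, p i * ‖g i y - gradf y‖ ^ 2
      ≤ 2 * (2 * ρ * (f y - f xstar)) + 2 * σ2 := by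
    have hER' := hER y
    rw [hgstar, sub_zero] at hER'
    calc ∑ i, p i * ‖g i y - gradf y‖ ^ 2
        ≤ ∑ i, p i * (2 * ‖g i y - g i xstar - gradf y‖ ^ 2 + 2 * ‖g i xstar‖ ^ 2) := by
          refine Finset.sum_le_sum fun i _ => ?_
          refine mul_le_mul_of_nonneg_left ?_ (hp0 i)
          have h : g i y - gradf y = (g i y - g i xstar - gradf y) + g i xstar := by abel
          rw [h]
          exact two_sq' _ _
      _ = 2 * (∑ i, p i * ‖g i y - g i xstar - gradf y‖ ^ 2)
            + 2 * (∑ i, p i * ‖g i xstar‖ ^ 2) := by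
          rw [Finset.mul_sum, Finset.mul_sum, ← Finset.sum_add_distrib]
          refine Finset.sum_congr rfl fun i _ => ?_
          ring
      _ ≤ 2 * (2 * ρ * (f y - f xstar)) + 2 * σ2 := by
          rw [hσ]
          linarith
  have hg := hgrad_sq y
  rw [hsum]
  linarith

lemma per_point' {E : Type*} [NormedAddCommGroup E] [InnerProductSpace ℝ E]
    {ι : Type*} [Fintype ι] (p : ι → ℝ)
    (hp1 : ∑ i, p i = 1)
    (f : E → ℝ) (gradf : E → E) (g : ι → E → E) (L ζ ρ σ2 γ : ℝ) (xstar : E)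
    (hζ0 : 0 < ζ) (hγ0 : 0 ≤ γ) (hγA : γ * (2 * ρ + L) = ζ / 2)
    (hquasar : ∀ x : E, f xstar ≥ f x + (1 / ζ) * ⟪gradf x, xstar - x⟫)
    (hmin : ∀ x, f xstar ≤ f x)
    (hunbiased : ∀ x : E, ∑ i, p i • g i x = gradf x)
    (hEg2 : ∀ y, ∑ i, p i * ‖g i y‖ ^ 2 ≤ 2 * (2 * ρ + L) * (f y - f xstar) + 2 * σ2) :
    ∀ y, ∑ i, p i * ‖(y - xstar) - γ • g i y‖ ^ 2
      ≤ ‖y - xstar‖ ^ 2 - γ * ζ * (f y - f xstar) + 2 * γ ^ 2 * σ2 := by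
  intro y
  have hinner : ∑ i, p i * ⟪g i y, y - xstar⟫ = ⟪gradf y, y - xstar⟫ := by
    rw [← hunbiased y, sum_inner]
    refine Finset.sum_congr rfl fun i _ => ?_
    rw [real_inner_smul_left]
  have hexp : ∑ i, p i * ‖(y - xstar) - γ • g i y‖ ^ 2
      = ‖y - xstar‖ ^ 2 - 2 * γ * ⟪gradf y, y - xstar⟫
        + γ ^ 2 * ∑ i, p i * ‖g i y‖ ^ 2 := by
    calc ∑ i, p i * ‖(y - xstar) - γ • g i y‖ ^ 2
        = ∑ i, (p i * ‖y - xstar‖ ^ 2 - 2 * γ * (p i * ⟪g i y, y - xstar⟫)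
            + γ ^ 2 * (p i * ‖g i y‖ ^ 2)) := by
          refine Finset.sum_congr rfl fun i _ => ?_
          rw [sq_expand']; ring
      _ = (∑ i, p i) * ‖y - xstar‖ ^ 2 - 2 * γ * (∑ i, p i * ⟪g i y, y - xstar⟫)
            + γ ^ 2 * (∑ i, p i * ‖g i y‖ ^ 2) := by
          rw [Finset.sum_add_distrib, Finset.sum_sub_distrib, ← Finset.sum_mul,
            ← Finset.mul_sum, ← Finset.mul_sum]
      _ = _ := by rw [hp1, one_mul, hinner]
  have hq : ζ * (f y - f xstar) ≤ ⟪gradf y, y - xstar⟫ := by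
    have h := hquasar y
    have h2 : ⟪gradf y, xstar - y⟫ = -⟪gradf y, y - xstar⟫ := by
      rw [← inner_neg_right]; congr 1; abel
    rw [h2] at h
    have h3 : ζ * (f y + 1 / ζ * (-⟪gradf y, y - xstar⟫)) ≤ ζ * f xstar :=
      mul_le_mul_of_nonneg_left h hζ0.le
    have h4 : ζ * (f y + 1 / ζ * (-⟪gradf y, y - xstar⟫))
        = ζ * f y - ⟪gradf y, y - xstar⟫ := by
      field_simp; ring
    rw [h4] at h3
    linarith
  have hS := hEg2 y
  have hΔ : 0 ≤ f y - f xstar := sub_nonneg.2 (hmin y)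
  rw [hexp]
  have h2 : γ ^ 2 * (∑ i, p i * ‖g i y‖ ^ 2)
      ≤ γ ^ 2 * (2 * (2 * ρ + L) * (f y - f xstar) + 2 * σ2) :=
    mul_le_mul_of_nonneg_left hS (sq_nonneg γ)
  have hI : -(2 * γ) * ⟪gradf y, y - xstar⟫ ≤ -(2 * γ) * (ζ * (f y - f xstar)) := by
    have := mul_le_mul_of_nonneg_left hq (by positivity : (0:ℝ) ≤ 2 * γ)
    linarith
  have hkey : γ ^ 2 * (2 * (2 * ρ + L) * (f y - f xstar) + 2 * σ2)
      = γ * ζ * (f y - f xstar) + 2 * γ ^ 2 * σ2 := by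
    linear_combination (2 * γ * (f y - f xstar)) * hγA
  linarith

/-- SGD on an `L`-smooth, `ζ`-quasar-convex function under the Expected Residual condition,
with constant step size `γ = ζ/(2(2ρ + L))`:
`min_{t<k} E[f(x^t) - f(x*)] ≤ 2‖x⁰ - x*‖²(2ρ+L)/(ζ²k) + σ²/(2ρ+L)`. -/
theorem sgd_quasar_convex_constant_step
    {E : Type*} [NormedAddCommGroup E] [InnerProductSpace ℝ E]
    {ι : Type*} [Fintype ι] [Inhabited ι] (p : ι → ℝ)
    (hp0 : ∀ i, 0 ≤ p i) (hp1 : ∑ i, p i = 1)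
    (f : E → ℝ) (gradf : E → E) (g : ι → E → E)
    (L ζ ρ σ2 γ : ℝ) (xstar x0 : E)
    (hL : 0 < L) (hζ0 : 0 < ζ) (hζ1 : ζ ≤ 1) (hρ : 0 ≤ ρ)
    (hsmooth : ∀ x z : E, f z ≤ f x + ⟪gradf x, z - x⟫ + L / 2 * ‖z - x‖ ^ 2)
    (hquasar : ∀ x : E, f xstar ≥ f x + (1 / ζ) * ⟪gradf x, xstar - x⟫)
    (hmin : ∀ x, f xstar ≤ f x)
    (hunbiased : ∀ x : E, ∑ i, p i • g i x = gradf x)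
    (hER : ∀ x : E, (∑ i, p i * ‖g i x - g i xstar - (gradf x - gradf xstar)‖ ^ 2) ≤
        2 * ρ * (f x - f xstar))
    (hσ : (∑ i, p i * ‖g i xstar‖ ^ 2) = σ2)
    (hγ : γ = ζ / (2 * (2 * ρ + L)))
    (x : ℕ → (ℕ → ι) → E)
    (hx0 : ∀ ω, x 0 ω = x0)
    (hrec : ∀ k ω, x (k + 1) ω = x k ω - γ • g (ω k) (x k ω)) :
    ∀ k : ℕ, 0 < k → ∃ t < k,
      (∑ ω : Fin t → ι, (∏ s, p (ω s)) *
          (f (x t (fun m => if h : m < t then ω ⟨m, h⟩ else default)) - f xstar)) ≤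
        2 * ‖x0 - xstar‖ ^ 2 * (2 * ρ + L) / (ζ ^ 2 * k) + σ2 / (2 * ρ + L) := by
  intro k hk
  have hA : 0 < 2 * ρ + L := by positivity
  have hγpos : 0 < γ := by rw [hγ]; positivity
  have hγA : γ * (2 * ρ + L) = ζ / 2 := by
    rw [hγ]; field_simp
  have hσ2 : 0 ≤ σ2 := by
    rw [← hσ]; exact Finset.sum_nonneg fun i _ => mul_nonneg (hp0 i) (by positivity)
  have hgrad_sq := grad_sq_le' f gradf L hL xstar hsmooth hmin
  have hgstar : gradf xstar = 0 := by
    have h := hgrad_sq xstar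
    simp only [sub_self, mul_zero] at h
    have h2 : ‖gradf xstar‖ = 0 := by nlinarith [norm_nonneg (gradf xstar)]
    exact norm_eq_zero.1 h2
  have hEg2 := second_moment' p hp0 hp1 f gradf g L ρ σ2 xstar hgstar hgrad_sq
    hunbiased hER hσ
  have hpp := per_point' p hp1 f gradf g L ζ ρ σ2 γ xstar hζ0 hγpos.le hγA
    hquasar hmin hunbiased hEg2
  -- dependence of x t only on the first t coordinates
  have hdep : ∀ t (ω ω' : ℕ → ι), (∀ m, m < t → ω m = ω' m) → x t ω = x t ω' := by
    intro t
    induction t with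
    | zero => intro ω ω' _; rw [hx0, hx0]
    | succ n ih =>
      intro ω ω' h
      rw [hrec, hrec, ih ω ω' (fun m hm => h m (Nat.lt_succ_of_lt hm)),
        h n (Nat.lt_succ_self n)]
  -- abbreviation for the extension
  set ext : ∀ t : ℕ, (Fin t → ι) → (ℕ → ι) :=
    fun t ω m => if h : m < t then ω ⟨m, h⟩ else default with hext
  have hstep : ∀ (t : ℕ) (ω : Fin t → ι) (i : ι),
      x (t + 1) (ext (t + 1) (Fin.snoc ω i)) = x t (ext t ω) - γ • g i (x t (ext t ω)) := by
    intro t ω i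
    rw [hrec]
    have he : ext (t + 1) (Fin.snoc ω i) t = i := by
      have hlt : t < t + 1 := Nat.lt_succ_self t
      simp only [hext, dif_pos hlt]
      show (Fin.snoc ω i : Fin (t + 1) → ι) (Fin.last t) = i
      simp
    have hxeq : x t (ext (t + 1) (Fin.snoc ω i)) = x t (ext t ω) := by
      apply hdep
      intro m hm
      simp only [hext, dif_pos hm, dif_pos (Nat.lt_succ_of_lt hm)]
      have hcast : (⟨m, Nat.lt_succ_of_lt hm⟩ : Fin (t + 1))
          = Fin.castSucc ⟨m, hm⟩ := rfl
      rw [hcast, Fin.snoc_castSucc]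
    rw [he, hxeq]
  have hsum_snoc : ∀ (t : ℕ) (F : (Fin (t + 1) → ι) → ℝ),
      ∑ ω : Fin (t + 1) → ι, F ω = ∑ ω : Fin t → ι, ∑ i, F (Fin.snoc ω i) := by
    intro t F
    rw [← (Fin.snocEquiv (fun _ => ι)).sum_comp, Fintype.sum_prod_type, Finset.sum_comm]
    rfl
  have hW : ∀ (t : ℕ) (ω : Fin t → ι) (i : ι),
      (∏ s : Fin (t + 1), p ((Fin.snoc ω i : Fin (t + 1) → ι) s))
        = (∏ s : Fin t, p (ω s)) * p i := by
    intro t ω i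
    rw [Fin.prod_univ_castSucc]
    simp
  have hW0 : ∀ (t : ℕ) (ω : Fin t → ι), 0 ≤ ∏ s, p (ω s) :=
    fun t ω => Finset.prod_nonneg fun s _ => hp0 _
  have hWsum : ∀ t : ℕ, ∑ ω : Fin t → ι, ∏ s, p (ω s) = 1 := by
    intro t
    have h := Finset.sum_prod_piFinset (Finset.univ : Finset ι) (fun (_ : Fin t) (j : ι) => p j)
    simp only [Fintype.piFinset_univ] at h
    rw [h]; simp [hp1]
  -- the expected squared distance and expected suboptimality
  obtain ⟨t, htk, hbound⟩ := telescope_min'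
    (fun t => ∑ ω : Fin t → ι, (∏ s, p (ω s)) * ‖x t (ext t ω) - xstar‖ ^ 2)
    (fun t => ∑ ω : Fin t → ι, (∏ s, p (ω s)) * (f (x t (ext t ω)) - f xstar))
    (γ * ζ) (2 * γ ^ 2 * σ2) (by positivity)
    (fun t => Finset.sum_nonneg fun ω _ => mul_nonneg (hW0 t ω) (by positivity))
    (by
      intro t
      calc ∑ ω : Fin (t + 1) → ι, (∏ s, p (ω s)) * ‖x (t + 1) (ext (t + 1) ω) - xstar‖ ^ 2
          = ∑ ω : Fin t → ι, ∑ i, ((∏ s, p (ω s)) *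
              (p i * ‖(x t (ext t ω) - xstar) - γ • g i (x t (ext t ω))‖ ^ 2)) := by
            rw [hsum_snoc t (fun ω => (∏ s, p (ω s)) * ‖x (t + 1) (ext (t + 1) ω) - xstar‖ ^ 2)]
            refine Finset.sum_congr rfl fun ω _ => Finset.sum_congr rfl fun i _ => ?_
            rw [hW, hstep]
            have h : x t (ext t ω) - γ • g i (x t (ext t ω)) - xstar
                = (x t (ext t ω) - xstar) - γ • g i (x t (ext t ω)) := by abel
            rw [h]; ring
        _ ≤ ∑ ω : Fin t → ι, (∏ s, p (ω s)) *
              (‖x t (ext t ω) - xstar‖ ^ 2 - γ * ζ * (f (x t (ext t ω)) - f xstar)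
                + 2 * γ ^ 2 * σ2) := by
            refine Finset.sum_le_sum fun ω _ => ?_
            rw [← Finset.mul_sum]
            exact mul_le_mul_of_nonneg_left (hpp (x t (ext t ω))) (hW0 t ω)
        _ = (∑ ω : Fin t → ι, (∏ s, p (ω s)) * ‖x t (ext t ω) - xstar‖ ^ 2)
              - γ * ζ * (∑ ω : Fin t → ι, (∏ s, p (ω s)) * (f (x t (ext t ω)) - f xstar))
              + 2 * γ ^ 2 * σ2 := by
            calc ∑ ω : Fin t → ι, (∏ s, p (ω s)) *
                  (‖x t (ext t ω) - xstar‖ ^ 2 - γ * ζ * (f (x t (ext t ω)) - f xstar)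
                    + 2 * γ ^ 2 * σ2)
                = ∑ ω : Fin t → ι, (((∏ s, p (ω s)) * ‖x t (ext t ω) - xstar‖ ^ 2
                    - γ * ζ * ((∏ s, p (ω s)) * (f (x t (ext t ω)) - f xstar)))
                    + (∏ s, p (ω s)) * (2 * γ ^ 2 * σ2)) := by
                  refine Finset.sum_congr rfl fun ω _ => ?_
                  ring
              _ = _ := by
                  rw [Finset.sum_add_distrib, Finset.sum_sub_distrib, ← Finset.mul_sum,
                    ← Finset.sum_mul, hWsum, one_mul])
    k hk
  refine ⟨t, htk, ?_⟩
  have hr0 : (∑ ω : Fin 0 → ι, (∏ s, p (ω s)) * ‖x 0 (ext 0 ω) - xstar‖ ^ 2)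
      = ‖x0 - xstar‖ ^ 2 := by
    simp [hx0]
  simp only [hr0] at hbound
  have hk0 : (0 : ℝ) < k := by exact_mod_cast hk
  have heq : ‖x0 - xstar‖ ^ 2 / (γ * ζ * k) + 2 * γ ^ 2 * σ2 / (γ * ζ)
      = 2 * ‖x0 - xstar‖ ^ 2 * (2 * ρ + L) / (ζ ^ 2 * k) + σ2 / (2 * ρ + L) := by
    rw [hγ]
    field_simp
  rw [heq] at hbound
  exact hbound
end

section
/- Assume f is L-smooth, ζ-quasar-convex with respect to x*, and g satisfies ER(ρ) with noise σ². For step sizes 0 < γ_t < ζ/(2ρ + L), the iterates of SGD satisfy: min over t < k of E[f(x^t) - f(x*)] ≤ [‖x^0 - x*‖²/2 + σ²∑_{t<k} γ_t²] / ∑_{t<k} γ_t(ζ - γ_t(2ρ + L)). -/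
open scoped RealInnerProductSpace
open Finset

/-- Extend a finite tuple to an infinite sequence by `default`. -/
def sgdExt {ι : Type*} [Inhabited ι] (t : ℕ) (ω : Fin t → ι) : ℕ → ι :=
  fun m => if h : m < t then ω ⟨m, h⟩ else default

/-- Expected squared distance to `xstar` at time `t`. -/
def sgdR {E : Type*} [NormedAddCommGroup E] {ι : Type*} [Fintype ι] [Inhabited ι]
    (p : ι → ℝ) (x : ℕ → (ℕ → ι) → E) (xstar : E) (t : ℕ) : ℝ :=
  ∑ ω : Fin t → ι, (∏ s, p (ω s)) * ‖x t (sgdExt t ω) - xstar‖ ^ 2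

/-- Expected suboptimality at time `t`. -/
def sgdF {E : Type*} [NormedAddCommGroup E] {ι : Type*} [Fintype ι] [Inhabited ι]
    (p : ι → ℝ) (f : E → ℝ) (x : ℕ → (ℕ → ι) → E) (xstar : E) (t : ℕ) : ℝ :=
  ∑ ω : Fin t → ι, (∏ s, p (ω s)) * (f (x t (sgdExt t ω)) - f xstar)

/-- SGD on an `L`-smooth, `ζ`-quasar-convex function under the Expected Residual condition,
with step sizes `0 < γ_t < ζ/(2ρ + L)`:
`min_{t<k} E[f(x^t) - f(x*)] ≤ (‖x⁰-x*‖²/2 + σ²∑_{t<k}γ_t²) / ∑_{t<k}γ_t(ζ - γ_t(2ρ+L))`. -/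
theorem sgd_quasar_convex_general_step
    {E : Type*} [NormedAddCommGroup E] [InnerProductSpace ℝ E]
    {ι : Type*} [Fintype ι] [Inhabited ι] (p : ι → ℝ)
    (hp0 : ∀ i, 0 ≤ p i) (hp1 : ∑ i, p i = 1)
    (f : E → ℝ) (gradf : E → E) (g : ι → E → E)
    (L ζ ρ σ2 : ℝ) (γ : ℕ → ℝ) (xstar x0 : E)
    (hL : 0 < L) (hζ0 : 0 < ζ) (hζ1 : ζ ≤ 1) (hρ : 0 ≤ ρ)
    (hsmooth : ∀ x z : E, f z ≤ f x + ⟪gradf x, z - x⟫ + L / 2 * ‖z - x‖ ^ 2)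
    (hquasar : ∀ x : E, f xstar ≥ f x + (1 / ζ) * ⟪gradf x, xstar - x⟫)
    (hmin : ∀ x, f xstar ≤ f x)
    (hunbiased : ∀ x : E, ∑ i, p i • g i x = gradf x)
    (hER : ∀ x : E, (∑ i, p i * ‖g i x - g i xstar - (gradf x - gradf xstar)‖ ^ 2) ≤
        2 * ρ * (f x - f xstar))
    (hσ : (∑ i, p i * ‖g i xstar‖ ^ 2) = σ2)
    (hγ : ∀ t, 0 < γ t ∧ γ t < ζ / (2 * ρ + L))
    (x : ℕ → (ℕ → ι) → E)
    (hx0 : ∀ ω, x 0 ω = x0)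
    (hrec : ∀ k ω, x (k + 1) ω = x k ω - γ k • g (ω k) (x k ω)) :
    ∀ k : ℕ, 0 < k → ∃ t < k,
      (∑ ω : Fin t → ι, (∏ s, p (ω s)) *
          (f (x t (fun m => if h : m < t then ω ⟨m, h⟩ else default)) - f xstar)) ≤
        (‖x0 - xstar‖ ^ 2 / 2 + σ2 * ∑ t ∈ Finset.range k, (γ t) ^ 2) /
          (∑ t ∈ Finset.range k, γ t * (ζ - γ t * (2 * ρ + L))) := by
  have hA : (0:ℝ) < 2 * ρ + L := by linarith
  have hLinv : L * L⁻¹ = 1 := mul_inv_cancel₀ hL.ne'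
  have hLinvpos : (0:ℝ) < L⁻¹ := inv_pos.2 hL
  have hσ0 : 0 ≤ σ2 := by
    rw [← hσ]
    exact Finset.sum_nonneg fun i _ => mul_nonneg (hp0 i) (by positivity)
  -- the gradient vanishes at the minimizer
  have hgrad0 : gradf xstar = 0 := by
    by_contra hne
    have hpos : 0 < ‖gradf xstar‖ ^ 2 := pow_pos (norm_pos_iff.mpr hne) 2
    have h := hsmooth xstar (xstar - L⁻¹ • gradf xstar)
    have h2 := hmin (xstar - L⁻¹ • gradf xstar)
    have e : xstar - L⁻¹ • gradf xstar - xstar = -(L⁻¹ • gradf xstar) := by abel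
    rw [e, inner_neg_right, real_inner_smul_right, real_inner_self_eq_norm_sq, norm_neg,
      norm_smul, Real.norm_eq_abs, abs_of_pos hLinvpos] at h
    have h3 : L / 2 * (L⁻¹ * ‖gradf xstar‖) ^ 2 = L⁻¹ * ‖gradf xstar‖ ^ 2 / 2 := by
      field_simp
    rw [h3] at h
    nlinarith [mul_pos hLinvpos hpos]
  -- ‖∇f y‖² ≤ 2L (f y - f*)
  have hgradsq : ∀ y : E, ‖gradf y‖ ^ 2 ≤ 2 * L * (f y - f xstar) := by
    intro y
    have h := hsmooth y (y - L⁻¹ • gradf y)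
    have h2 := hmin (y - L⁻¹ • gradf y)
    have e : y - L⁻¹ • gradf y - y = -(L⁻¹ • gradf y) := by abel
    rw [e, inner_neg_right, real_inner_smul_right, real_inner_self_eq_norm_sq, norm_neg,
      norm_smul, Real.norm_eq_abs, abs_of_pos hLinvpos] at h
    have h3 : L / 2 * (L⁻¹ * ‖gradf y‖) ^ 2 = L⁻¹ * ‖gradf y‖ ^ 2 / 2 := by
      field_simp
    rw [h3] at h
    have h4 : L⁻¹ * ‖gradf y‖ ^ 2 ≤ 2 * (f y - f xstar) := by linarith
    calc ‖gradf y‖ ^ 2 = L * (L⁻¹ * ‖gradf y‖ ^ 2) := by rw [← mul_assoc, hLinv, one_mul]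
      _ ≤ L * (2 * (f y - f xstar)) := mul_le_mul_of_nonneg_left h4 hL.le
      _ = 2 * L * (f y - f xstar) := by ring
  -- quasar convexity, rearranged
  have hquasar' : ∀ y : E, ζ * (f y - f xstar) ≤ ⟪gradf y, y - xstar⟫ := by
    intro y
    have h := hquasar y
    have hinv : ζ * (1 / ζ) = 1 := mul_one_div_cancel hζ0.ne'
    have e : ⟪gradf y, y - xstar⟫ = -⟪gradf y, xstar - y⟫ := by
      rw [← inner_neg_right, neg_sub]
    rw [e]
    have h5 : ζ * (f y + 1 / ζ * ⟪gradf y, xstar - y⟫) ≤ ζ * f xstar :=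
      mul_le_mul_of_nonneg_left (by linarith) hζ0.le
    have h6 : ζ * (f y + 1 / ζ * ⟪gradf y, xstar - y⟫)
        = ζ * f y + ⟪gradf y, xstar - y⟫ := by
      rw [mul_add, ← mul_assoc, hinv, one_mul]
    linarith
  -- second moment bound
  have hsq : ∀ y : E, ∑ i, p i * ‖g i y‖ ^ 2
      ≤ 2 * (2 * ρ + L) * (f y - f xstar) + 2 * σ2 := by
    intro y
    -- variance decomposition
    have hvar : ∑ i, p i * ‖g i y‖ ^ 2
        = (∑ i, p i * ‖g i y - gradf y‖ ^ 2) + ‖gradf y‖ ^ 2 := by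
      have expand : ∀ i, p i * ‖g i y‖ ^ 2
          = p i * ‖g i y - gradf y‖ ^ 2
            + 2 * ⟪p i • (g i y - gradf y), gradf y⟫ + p i * ‖gradf y‖ ^ 2 := by
        intro i
        have e1 : g i y = (g i y - gradf y) + gradf y := by abel
        calc p i * ‖g i y‖ ^ 2 = p i * ‖(g i y - gradf y) + gradf y‖ ^ 2 := by rw [← e1]
          _ = _ := by rw [norm_add_sq_real, real_inner_smul_left]; ring
      rw [Finset.sum_congr rfl fun i _ => expand i]
      rw [Finset.sum_add_distrib, Finset.sum_add_distrib, ← Finset.sum_mul, hp1, one_mul]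
      have hzero : ∑ i, (2:ℝ) * ⟪p i • (g i y - gradf y), gradf y⟫ = 0 := by
        rw [← Finset.mul_sum, ← sum_inner]
        have : ∑ i, p i • (g i y - gradf y) = 0 := by
          simp only [smul_sub]
          rw [Finset.sum_sub_distrib, hunbiased, ← Finset.sum_smul, hp1, one_smul, sub_self]
        rw [this, inner_zero_left, mul_zero]
      rw [hzero, add_zero]
    -- bound the residual term
    have hres : ∑ i, p i * ‖g i y - gradf y‖ ^ 2
        ≤ 2 * (2 * ρ * (f y - f xstar)) + 2 * σ2 := by
      have hbd : ∀ i, p i * ‖g i y - gradf y‖ ^ 2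
          ≤ 2 * (p i * ‖g i y - g i xstar - (gradf y - gradf xstar)‖ ^ 2)
            + 2 * (p i * ‖g i xstar‖ ^ 2) := by
        intro i
        have e1 : g i y - gradf y
            = (g i y - g i xstar - (gradf y - gradf xstar)) + g i xstar := by
          rw [hgrad0]; abel
        have key : ‖g i y - gradf y‖ ^ 2
            ≤ 2 * ‖g i y - g i xstar - (gradf y - gradf xstar)‖ ^ 2
              + 2 * ‖g i xstar‖ ^ 2 := by
          rw [e1]
          have h1 := norm_add_sq_real (g i y - g i xstar - (gradf y - gradf xstar)) (g i xstar)
          have h2 := real_inner_le_norm (g i y - g i xstar - (gradf y - gradf xstar)) (g i xstar)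
          nlinarith [sq_nonneg (‖g i y - g i xstar - (gradf y - gradf xstar)‖ - ‖g i xstar‖)]
        nlinarith [hp0 i, key]
      calc ∑ i, p i * ‖g i y - gradf y‖ ^ 2
          ≤ ∑ i, (2 * (p i * ‖g i y - g i xstar - (gradf y - gradf xstar)‖ ^ 2)
              + 2 * (p i * ‖g i xstar‖ ^ 2)) :=
            Finset.sum_le_sum fun i _ => hbd i
        _ = 2 * (∑ i, p i * ‖g i y - g i xstar - (gradf y - gradf xstar)‖ ^ 2)
              + 2 * (∑ i, p i * ‖g i xstar‖ ^ 2) := by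
            rw [Finset.sum_add_distrib, ← Finset.mul_sum, ← Finset.mul_sum]
        _ ≤ 2 * (2 * ρ * (f y - f xstar)) + 2 * σ2 := by
            have := hER y
            rw [hσ]
            linarith
    have := hgradsq y
    rw [hvar]
    linarith
  -- one-step pointwise bound
  have hkey : ∀ (t : ℕ) (y : E),
      ∑ i, p i * ‖y - γ t • g i y - xstar‖ ^ 2
        ≤ ‖y - xstar‖ ^ 2 - 2 * (γ t * (ζ - γ t * (2 * ρ + L))) * (f y - f xstar)
          + 2 * (γ t) ^ 2 * σ2 := by
    intro t y
    have expand : ∀ i, p i * ‖y - γ t • g i y - xstar‖ ^ 2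
        = p i * ‖y - xstar‖ ^ 2 - 2 * γ t * ⟪p i • g i y, y - xstar⟫
          + (γ t) ^ 2 * (p i * ‖g i y‖ ^ 2) := by
      intro i
      have e1 : y - γ t • g i y - xstar = (y - xstar) - γ t • g i y := by abel
      rw [e1, norm_sub_sq_real, real_inner_smul_right, norm_smul, Real.norm_eq_abs,
        real_inner_smul_left, real_inner_comm]
      rw [mul_pow, sq_abs]
      ring
    have e : ∑ i, p i * ‖y - γ t • g i y - xstar‖ ^ 2
        = ‖y - xstar‖ ^ 2 - 2 * γ t * ⟪gradf y, y - xstar⟫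
          + (γ t) ^ 2 * ∑ i, p i * ‖g i y‖ ^ 2 := by
      rw [Finset.sum_congr rfl fun i _ => expand i]
      rw [Finset.sum_add_distrib, Finset.sum_sub_distrib, ← Finset.sum_mul, hp1, one_mul,
        ← Finset.mul_sum, ← Finset.mul_sum, ← sum_inner, hunbiased]
    rw [e]
    have h1 := hquasar' y
    have h2 := hsq y
    have hγt := (hγ t).1
    nlinarith [mul_le_mul_of_nonneg_left h2 (sq_nonneg (γ t)),
      mul_le_mul_of_nonneg_left h1 (by linarith : (0:ℝ) ≤ 2 * γ t)]
  -- iterates only depend on the past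
  have hdep : ∀ (t : ℕ) (ω ω' : ℕ → ι), (∀ m, m < t → ω m = ω' m) → x t ω = x t ω' := by
    intro t
    induction t with
    | zero => intro ω ω' _; rw [hx0, hx0]
    | succ n ih =>
        intro ω ω' h
        have hx : x n ω = x n ω' := ih ω ω' fun m hm => h m (hm.trans (Nat.lt_succ_self n))
        rw [hrec, hrec, hx, h n (Nat.lt_succ_self n)]
  -- structural facts about the extension
  have hX : ∀ (t : ℕ) (ω : Fin t → ι) (i : ι),
      x (t + 1) (sgdExt (t + 1) (Fin.snoc ω i))
        = x t (sgdExt t ω) - γ t • g i (x t (sgdExt t ω)) := by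
    intro t ω i
    rw [hrec]
    have h1 : sgdExt (t + 1) (Fin.snoc ω i) t = i := by
      simp [sgdExt, Fin.snoc]
    have h2 : x t (sgdExt (t + 1) (Fin.snoc ω i)) = x t (sgdExt t ω) := by
      apply hdep
      intro m hm
      simp [sgdExt, Fin.snoc, hm, hm.trans (Nat.lt_succ_self t)]
    rw [h1, h2]
  have hprod : ∀ (t : ℕ) (ω : Fin t → ι) (i : ι),
      (∏ s : Fin (t + 1), p ((Fin.snoc ω i : Fin (t + 1) → ι) s)) = (∏ s : Fin t, p (ω s)) * p i := by
    intro t ω i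
    rw [Fin.prod_univ_castSucc]
    simp
  have hsnocsum : ∀ (t : ℕ) (h : (Fin (t + 1) → ι) → ℝ),
      ∑ ν : Fin (t + 1) → ι, h ν = ∑ ω : Fin t → ι, ∑ i : ι, h (Fin.snoc ω i) := by
    intro t h
    rw [← Equiv.sum_comp (Fin.snocEquiv fun _ => ι) h, Fintype.sum_prod_type]
    rw [Finset.sum_comm]
    rfl
  have hWsum : ∀ t : ℕ, ∑ ω : Fin t → ι, (∏ s, p (ω s)) = 1 := by
    intro t
    induction t with
    | zero => simp
    | succ n ihn =>
        rw [hsnocsum n]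
        calc ∑ ω : Fin n → ι, ∑ i : ι, ∏ s : Fin (n + 1), p ((Fin.snoc ω i : Fin (n + 1) → ι) s)
            = ∑ ω : Fin n → ι, ∑ i : ι, (∏ s : Fin n, p (ω s)) * p i :=
              Finset.sum_congr rfl fun ω _ => Finset.sum_congr rfl fun i _ => hprod n ω i
          _ = ∑ ω : Fin n → ι, (∏ s : Fin n, p (ω s)) * ∑ i, p i := by
              refine Finset.sum_congr rfl fun ω _ => ?_
              rw [Finset.mul_sum]
          _ = ∑ ω : Fin n → ι, ∏ s : Fin n, p (ω s) := by simp [hp1]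
          _ = 1 := ihn
  -- one-step recursion in expectation
  have hstep : ∀ t : ℕ, sgdR p x xstar (t + 1)
      ≤ sgdR p x xstar t
        - 2 * (γ t * (ζ - γ t * (2 * ρ + L))) * sgdF p f x xstar t
        + 2 * (γ t) ^ 2 * σ2 := by
    intro t
    have e1 : sgdR p x xstar (t + 1)
        = ∑ ω : Fin t → ι, (∏ s, p (ω s)) *
            ∑ i, p i * ‖x t (sgdExt t ω) - γ t • g i (x t (sgdExt t ω)) - xstar‖ ^ 2 := by
      unfold sgdR
      rw [hsnocsum t]
      refine Finset.sum_congr rfl fun ω _ => ?_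
      rw [Finset.mul_sum]
      refine Finset.sum_congr rfl fun i _ => ?_
      rw [hprod, hX]
      ring
    rw [e1]
    have hbd : ∀ ω : Fin t → ι, (∏ s, p (ω s)) *
        (∑ i, p i * ‖x t (sgdExt t ω) - γ t • g i (x t (sgdExt t ω)) - xstar‖ ^ 2)
        ≤ (∏ s, p (ω s)) *
          (‖x t (sgdExt t ω) - xstar‖ ^ 2
            - 2 * (γ t * (ζ - γ t * (2 * ρ + L))) * (f (x t (sgdExt t ω)) - f xstar)
            + 2 * (γ t) ^ 2 * σ2) := by
      intro ω
      exact mul_le_mul_of_nonneg_left (hkey t _)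
        (Finset.prod_nonneg fun s _ => hp0 (ω s))
    calc ∑ ω : Fin t → ι, (∏ s, p (ω s)) *
          ∑ i, p i * ‖x t (sgdExt t ω) - γ t • g i (x t (sgdExt t ω)) - xstar‖ ^ 2
        ≤ ∑ ω : Fin t → ι, (∏ s, p (ω s)) *
          (‖x t (sgdExt t ω) - xstar‖ ^ 2
            - 2 * (γ t * (ζ - γ t * (2 * ρ + L))) * (f (x t (sgdExt t ω)) - f xstar)
            + 2 * (γ t) ^ 2 * σ2) := Finset.sum_le_sum fun ω _ => hbd ω
      _ = sgdR p x xstar t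
            - 2 * (γ t * (ζ - γ t * (2 * ρ + L))) * sgdF p f x xstar t
            + 2 * (γ t) ^ 2 * σ2 := by
          unfold sgdR sgdF
          calc ∑ ω : Fin t → ι, (∏ s, p (ω s)) *
                (‖x t (sgdExt t ω) - xstar‖ ^ 2
                  - 2 * (γ t * (ζ - γ t * (2 * ρ + L))) * (f (x t (sgdExt t ω)) - f xstar)
                  + 2 * (γ t) ^ 2 * σ2)
              = ∑ ω : Fin t → ι,
                (((∏ s, p (ω s)) * ‖x t (sgdExt t ω) - xstar‖ ^ 2
                  - 2 * (γ t * (ζ - γ t * (2 * ρ + L))) *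
                    ((∏ s, p (ω s)) * (f (x t (sgdExt t ω)) - f xstar)))
                  + (∏ s, p (ω s)) * (2 * (γ t) ^ 2 * σ2)) :=
                Finset.sum_congr rfl fun ω _ => by ring
            _ = _ := by
                rw [Finset.sum_add_distrib, Finset.sum_sub_distrib, ← Finset.mul_sum,
                  ← Finset.sum_mul, hWsum t, one_mul]
  -- nonnegativity and initial value
  have hR0 : ∀ t, 0 ≤ sgdR p x xstar t := fun t =>
    Finset.sum_nonneg fun ω _ =>
      mul_nonneg (Finset.prod_nonneg fun s _ => hp0 (ω s)) (by positivity)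
  have hRinit : sgdR p x xstar 0 = ‖x0 - xstar‖ ^ 2 := by
    unfold sgdR
    simp [hx0]
  have hc : ∀ t, 0 < γ t * (ζ - γ t * (2 * ρ + L)) := by
    intro t
    obtain ⟨h1, h2⟩ := hγ t
    have : γ t * (2 * ρ + L) < ζ := (lt_div_iff₀ hA).mp h2
    have : 0 < ζ - γ t * (2 * ρ + L) := by linarith
    exact mul_pos h1 this
  have hFnn : ∀ t, 0 ≤ sgdF p f x xstar t := fun t =>
    Finset.sum_nonneg fun ω _ =>
      mul_nonneg (Finset.prod_nonneg fun s _ => hp0 (ω s))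
        (sub_nonneg.2 (hmin _))
  -- conclusion
  intro k hk
  have hne : (Finset.range k).Nonempty := ⟨0, Finset.mem_range.2 hk⟩
  obtain ⟨t0, ht0mem, ht0min⟩ :=
    Finset.exists_min_image (Finset.range k) (fun t => sgdF p f x xstar t) hne
  refine ⟨t0, Finset.mem_range.mp ht0mem, ?_⟩
  have hD : 0 < ∑ t ∈ Finset.range k, γ t * (ζ - γ t * (2 * ρ + L)) :=
    Finset.sum_pos (fun t _ => hc t) hne
  have htel : ∑ t ∈ Finset.range k,
      2 * (γ t * (ζ - γ t * (2 * ρ + L))) * sgdF p f x xstar t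
      ≤ ‖x0 - xstar‖ ^ 2 + 2 * σ2 * ∑ t ∈ Finset.range k, (γ t) ^ 2 := by
    calc ∑ t ∈ Finset.range k,
          2 * (γ t * (ζ - γ t * (2 * ρ + L))) * sgdF p f x xstar t
        ≤ ∑ t ∈ Finset.range k,
            ((sgdR p x xstar t - sgdR p x xstar (t + 1)) + 2 * σ2 * (γ t) ^ 2) := by
          refine Finset.sum_le_sum fun t _ => ?_
          have := hstep t
          linarith
      _ = (sgdR p x xstar 0 - sgdR p x xstar k)
            + 2 * σ2 * ∑ t ∈ Finset.range k, (γ t) ^ 2 := by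
          rw [Finset.sum_add_distrib, Finset.sum_range_sub', ← Finset.mul_sum]
      _ ≤ ‖x0 - xstar‖ ^ 2 + 2 * σ2 * ∑ t ∈ Finset.range k, (γ t) ^ 2 := by
          have := hR0 k
          rw [hRinit]
          linarith
  show sgdF p f x xstar t0 ≤ _
  rw [le_div_iff₀ hD]
  calc sgdF p f x xstar t0 * ∑ t ∈ Finset.range k, γ t * (ζ - γ t * (2 * ρ + L))
      = ∑ t ∈ Finset.range k, sgdF p f x xstar t0 * (γ t * (ζ - γ t * (2 * ρ + L))) := by
        rw [Finset.mul_sum]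
    _ ≤ ∑ t ∈ Finset.range k, sgdF p f x xstar t * (γ t * (ζ - γ t * (2 * ρ + L))) :=
        Finset.sum_le_sum fun t ht =>
          mul_le_mul_of_nonneg_right (ht0min t ht) (hc t).le
    _ ≤ ‖x0 - xstar‖ ^ 2 / 2 + σ2 * ∑ t ∈ Finset.range k, (γ t) ^ 2 := by
        have e : ∑ t ∈ Finset.range k,
            sgdF p f x xstar t * (γ t * (ζ - γ t * (2 * ρ + L)))
            = (∑ t ∈ Finset.range k,
                2 * (γ t * (ζ - γ t * (2 * ρ + L))) * sgdF p f x xstar t) / 2 := by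
          rw [Finset.sum_div]
          refine Finset.sum_congr rfl fun t _ => by ring
        rw [e]
        linarith
end

section
/- Assume f is L-smooth, satisfies the PL condition with constant μ, g satisfies ER(ρ) with noise σ². For SGD with constant step size γ ≤ 1/(L(1 + 2ρ/μ)), E[f(x^k) - f*] ≤ (1 - γμ)^k (f(x^0) - f*) + Lγσ²/μ. -/
open scoped RealInnerProductSpace
open Finset

set_option maxHeartbeats 1000000 in
/-- SGD on an `L`-smooth function satisfying the PL condition, under the Expected Residual
condition, with constant step size `γ ≤ 1/(L(1 + 2ρ/μ))`:
`E[f(x^k) - f*] ≤ (1 - γμ)^k (f(x⁰) - f*) + Lγσ²/μ`. -/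
theorem sgd_PL_constant_step
    {E : Type*} [NormedAddCommGroup E] [InnerProductSpace ℝ E]
    {ι : Type*} [Fintype ι] [Inhabited ι] (p : ι → ℝ)
    (hp0 : ∀ i, 0 ≤ p i) (hp1 : ∑ i, p i = 1)
    (f : E → ℝ) (gradf : E → E) (g : ι → E → E)
    (L μ ρ σ2 γ fstar : ℝ) (xstar x0 : E)
    (hL : 0 < L) (hμ : 0 < μ) (hρ : 0 ≤ ρ)
    (hsmooth : ∀ x z : E, f z ≤ f x + ⟪gradf x, z - x⟫ + L / 2 * ‖z - x‖ ^ 2)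
    (hPL : ∀ x : E, ‖gradf x‖ ^ 2 ≥ 2 * μ * (f x - fstar))
    (hmin : ∀ x, fstar ≤ f x) (hfs : f xstar = fstar) (hgs : gradf xstar = 0)
    (hunbiased : ∀ x : E, ∑ i, p i • g i x = gradf x)
    (hER : ∀ x : E, (∑ i, p i * ‖g i x - g i xstar - (gradf x - gradf xstar)‖ ^ 2) ≤
        2 * ρ * (f x - fstar))
    (hσ : (∑ i, p i * ‖g i xstar‖ ^ 2) = σ2)
    (hγ0 : 0 < γ) (hγ : γ ≤ 1 / (L * (1 + 2 * ρ / μ)))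
    (x : ℕ → (ℕ → ι) → E)
    (hx0 : ∀ ω, x 0 ω = x0)
    (hrec : ∀ k ω, x (k + 1) ω = x k ω - γ • g (ω k) (x k ω)) :
    ∀ k : ℕ,
      (∑ ω : Fin k → ι, (∏ s, p (ω s)) *
          (f (x k (fun m => if h : m < k then ω ⟨m, h⟩ else default)) - fstar)) ≤
        (1 - γ * μ) ^ k * (f x0 - fstar) + L * γ * σ2 / μ := by
  -- basic positivity facts
  have hσ2 : 0 ≤ σ2 := by
    rw [← hσ]
    exact Finset.sum_nonneg fun i _ => mul_nonneg (hp0 i) (by positivity)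
  have hconstpos : 0 ≤ L * γ * σ2 / μ :=
    div_nonneg (mul_nonneg (mul_nonneg hL.le hγ0.le) hσ2) hμ.le
  -- step size facts
  have hden : 0 < L * (1 + 2 * ρ / μ) := by positivity
  have hγL : γ * (L * (1 + 2 * ρ / μ)) ≤ 1 := by
    rw [le_div_iff₀ hden] at hγ
    exact hγ
  have hkey : L * γ * (μ + 2 * ρ) ≤ μ := by
    have h2 : (2 * ρ / μ) * μ = 2 * ρ := div_mul_cancel₀ _ hμ.ne'
    nlinarith [mul_le_mul_of_nonneg_right hγL hμ.le]
  have hLγ1 : L * γ ≤ 1 := by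
    nlinarith [mul_nonneg (mul_nonneg hL.le hγ0.le) hρ]
  -- per-sample smoothness along a step
  have hsm : ∀ (y : E) (i : ι),
      f (y - γ • g i y) ≤ f y - γ * ⟪gradf y, g i y⟫ + L / 2 * (γ ^ 2 * ‖g i y‖ ^ 2) := by
    intro y i
    have h := hsmooth y (y - γ • g i y)
    have h1 : y - γ • g i y - y = -(γ • g i y) := by abel
    rw [h1, inner_neg_right, real_inner_smul_right, norm_neg, norm_smul, Real.norm_eq_abs,
      abs_of_pos hγ0, mul_pow] at h
    linarith
  -- one-step expected decrease
  have key : ∀ y : E, (∑ i, p i * (f (y - γ • g i y) - fstar)) ≤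
      (1 - γ * μ) * (f y - fstar) + L * γ ^ 2 * σ2 := by
    intro y
    have hΔ : 0 ≤ f y - fstar := sub_nonneg.2 (hmin y)
    -- averaged smoothness
    have hinner : (∑ i, p i * ⟪gradf y, g i y⟫) = ‖gradf y‖ ^ 2 := by
      have h : (∑ i, p i * ⟪gradf y, g i y⟫) = ⟪gradf y, ∑ i, p i • g i y⟫ := by
        rw [inner_sum]
        exact Finset.sum_congr rfl fun i _ => (real_inner_smul_right _ _ _).symm
      rw [h, hunbiased, real_inner_self_eq_norm_sq]
    have hsum : (∑ i, p i * f (y - γ • g i y)) ≤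
        f y - γ * ‖gradf y‖ ^ 2 + L / 2 * γ ^ 2 * (∑ i, p i * ‖g i y‖ ^ 2) := by
      have h1 : (∑ i, p i * f (y - γ • g i y)) ≤
          ∑ i, p i * (f y - γ * ⟪gradf y, g i y⟫ + L / 2 * (γ ^ 2 * ‖g i y‖ ^ 2)) :=
        Finset.sum_le_sum fun i _ => mul_le_mul_of_nonneg_left (hsm y i) (hp0 i)
      have h2 : (∑ i, p i * (f y - γ * ⟪gradf y, g i y⟫ + L / 2 * (γ ^ 2 * ‖g i y‖ ^ 2)))
          = (∑ i, p i) * f y - γ * (∑ i, p i * ⟪gradf y, g i y⟫)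
            + L / 2 * γ ^ 2 * (∑ i, p i * ‖g i y‖ ^ 2) := by
        rw [Finset.sum_mul, Finset.mul_sum, Finset.mul_sum, ← Finset.sum_sub_distrib,
          ← Finset.sum_add_distrib]
        exact Finset.sum_congr rfl fun i _ => by ring
      rw [h2, hinner, hp1, one_mul] at h1
      exact h1
    -- second moment bound
    have hcross : (∑ i, p i • (g i y - gradf y)) = 0 := by
      simp only [smul_sub]
      rw [Finset.sum_sub_distrib, hunbiased, ← Finset.sum_smul, hp1, one_smul, sub_self]
    have hS : (∑ i, p i * ‖g i y‖ ^ 2) ≤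
        4 * ρ * (f y - fstar) + 2 * σ2 + ‖gradf y‖ ^ 2 := by
      have hdec : ∀ i : ι, ‖g i y‖ ^ 2 =
          ‖g i y - gradf y‖ ^ 2 + 2 * ⟪g i y - gradf y, gradf y⟫ + ‖gradf y‖ ^ 2 := by
        intro i
        have h := norm_add_sq_real (g i y - gradf y) (gradf y)
        have h2 : g i y - gradf y + gradf y = g i y := by abel
        rw [h2] at h
        linarith
      have hsplit : (∑ i, p i * ‖g i y‖ ^ 2)
          = (∑ i, p i * ‖g i y - gradf y‖ ^ 2)
            + 2 * ⟪∑ i, p i • (g i y - gradf y), gradf y⟫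
            + (∑ i, p i) * ‖gradf y‖ ^ 2 := by
        rw [sum_inner]
        simp_rw [real_inner_smul_left]
        rw [Finset.mul_sum, Finset.sum_mul, ← Finset.sum_add_distrib, ← Finset.sum_add_distrib]
        exact Finset.sum_congr rfl fun i _ => by rw [hdec i]; ring
      have h1 : ∀ i : ι, ‖g i y - gradf y‖ ^ 2 ≤
          2 * ‖g i y - g i xstar - gradf y‖ ^ 2 + 2 * ‖g i xstar‖ ^ 2 := by
        intro i
        have h := norm_add_le (g i y - g i xstar - gradf y) (g i xstar)
        have h2 : g i y - g i xstar - gradf y + g i xstar = g i y - gradf y := by abel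
        rw [h2] at h
        nlinarith [pow_le_pow_left₀ (norm_nonneg _) h 2,
          sq_nonneg (‖g i y - g i xstar - gradf y‖ - ‖g i xstar‖)]
      have hER' := hER y
      rw [hgs, sub_zero] at hER'
      have hbound : (∑ i, p i * ‖g i y - gradf y‖ ^ 2)
          ≤ 2 * (2 * ρ * (f y - fstar)) + 2 * σ2 := by
        calc (∑ i, p i * ‖g i y - gradf y‖ ^ 2)
            ≤ ∑ i, p i * (2 * ‖g i y - g i xstar - gradf y‖ ^ 2 + 2 * ‖g i xstar‖ ^ 2) :=
              Finset.sum_le_sum fun i _ => mul_le_mul_of_nonneg_left (h1 i) (hp0 i)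
          _ = 2 * (∑ i, p i * ‖g i y - g i xstar - gradf y‖ ^ 2)
              + 2 * (∑ i, p i * ‖g i xstar‖ ^ 2) := by
              rw [Finset.mul_sum, Finset.mul_sum, ← Finset.sum_add_distrib]
              exact Finset.sum_congr rfl fun i _ => by ring
          _ ≤ 2 * (2 * ρ * (f y - fstar)) + 2 * σ2 := by
              rw [hσ]
              linarith
      rw [hsplit, hcross, inner_zero_left, hp1]
      linarith
    have hfinal : (∑ i, p i * (f (y - γ • g i y) - fstar))
        = (∑ i, p i * f (y - γ • g i y)) - fstar := by
      simp_rw [mul_sub]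
      rw [Finset.sum_sub_distrib, ← Finset.sum_mul, hp1, one_mul]
    rw [hfinal]
    have hPLy : 2 * μ * (f y - fstar) ≤ ‖gradf y‖ ^ 2 := hPL y
    nlinarith [hsum,
      mul_le_mul_of_nonneg_left hS (by positivity : (0:ℝ) ≤ L / 2 * γ ^ 2),
      mul_le_mul_of_nonneg_left hPLy
        (mul_nonneg hγ0.le (by nlinarith : (0:ℝ) ≤ 1 - L * γ / 2)),
      mul_nonneg (mul_nonneg hγ0.le hΔ) (by linarith : (0:ℝ) ≤ μ - L * γ * (μ + 2 * ρ))]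
  -- trajectories only depend on the first k coordinates
  have xcongr : ∀ (k : ℕ) (ω₁ ω₂ : ℕ → ι), (∀ m, m < k → ω₁ m = ω₂ m) → x k ω₁ = x k ω₂ := by
    intro k
    induction k with
    | zero => intro ω₁ ω₂ _; rw [hx0, hx0]
    | succ n ih =>
      intro ω₁ ω₂ h
      rw [hrec, hrec, ih ω₁ ω₂ (fun m hm => h m (hm.trans (Nat.lt_succ_self n))),
        h n (Nat.lt_succ_self n)]
  -- reindexing sums over tuples
  have reindex : ∀ (n : ℕ) (F : (Fin (n + 1) → ι) → ℝ),
      (∑ ω : Fin (n + 1) → ι, F ω) = ∑ ω : Fin n → ι, ∑ i : ι, F (Fin.snoc ω i) := by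
    intro n F
    rw [← Fintype.sum_bijective _ (Fin.snocEquiv (fun _ : Fin (n + 1) => ι)).bijective
      (fun q : ι × (Fin n → ι) => F (Fin.snoc q.2 q.1)) F (fun q => rfl)]
    rw [Fintype.sum_prod_type]
    exact Finset.sum_comm
  have hsnoc_prod : ∀ (n : ℕ) (ω : Fin n → ι) (i : ι),
      (∏ s : Fin (n + 1), p (Fin.snoc (α := fun _ => ι) ω i s)) = (∏ s, p (ω s)) * p i := by
    intro n ω i
    rw [Fin.prod_univ_castSucc]
    simp
  have hprob : ∀ n : ℕ, (∑ ω : Fin n → ι, ∏ s, p (ω s)) = 1 := by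
    intro n
    induction n with
    | zero => simp
    | succ n ih =>
      rw [reindex n (fun ω => ∏ s, p (ω s))]
      calc (∑ ω : Fin n → ι, ∑ i : ι, ∏ s : Fin (n + 1), p (Fin.snoc (α := fun _ => ι) ω i s))
          = ∑ ω : Fin n → ι, ∏ s, p (ω s) := by
            refine Finset.sum_congr rfl fun ω _ => ?_
            simp_rw [hsnoc_prod n ω]
            rw [← Finset.mul_sum, hp1, mul_one]
        _ = 1 := ih
  -- x-step identity for snoc-extended tuples
  have hx_step : ∀ (n : ℕ) (ω : Fin n → ι) (i : ι),
      x (n + 1) (fun m => if h : m < n + 1 then Fin.snoc (α := fun _ => ι) ω i ⟨m, h⟩ else default)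
      = x n (fun m => if h : m < n then ω ⟨m, h⟩ else default)
        - γ • g i (x n (fun m => if h : m < n then ω ⟨m, h⟩ else default)) := by
    intro n ω i
    rw [hrec]
    have h1 : (if h : n < n + 1 then Fin.snoc (α := fun _ => ι) ω i ⟨n, h⟩ else default) = i := by
      simp [Fin.snoc]
    have h2 : x n (fun m => if h : m < n + 1 then Fin.snoc (α := fun _ => ι) ω i ⟨m, h⟩ else default)
        = x n (fun m => if h : m < n then ω ⟨m, h⟩ else default) := by
      apply xcongr
      intro m hm
      have hm' : m < n + 1 := hm.trans (Nat.lt_succ_self n)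
      simp only [dif_pos hm, dif_pos hm']
      simp [Fin.snoc, hm]
    rw [h1, h2]
  by_cases hconst : ∀ y : E, f y = fstar
  · intro k
    simp only [hconst, sub_self, mul_zero, Finset.sum_const_zero, zero_add]
    exact hconstpos
  · -- there is a point with positive gap, hence μ ≤ L and γμ ≤ 1
    push_neg at hconst
    obtain ⟨y0, hy0⟩ := hconst
    have hgb : ∀ y : E, ‖gradf y‖ ^ 2 ≤ 2 * L * (f y - fstar) := by
      intro y
      have hz := hmin (y - (1 / L) • gradf y)
      have hsd := hsmooth y (y - (1 / L) • gradf y)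
      have h1 : y - (1 / L) • gradf y - y = -((1 / L) • gradf y) := by abel
      rw [h1, inner_neg_right, real_inner_smul_right, real_inner_self_eq_norm_sq, norm_neg,
        norm_smul, Real.norm_eq_abs, abs_of_pos (by positivity : (0:ℝ) < 1 / L), mul_pow] at hsd
      have e1 : L / 2 * ((1 / L) ^ 2 * ‖gradf y‖ ^ 2) = 1 / 2 * (1 / L * ‖gradf y‖ ^ 2) := by
        field_simp
      have h3 : 1 / L * ‖gradf y‖ ^ 2 ≤ 2 * (f y - fstar) := by
        rw [e1] at hsd
        linarith
      have h4 := mul_le_mul_of_nonneg_left h3 hL.le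
      rw [← mul_assoc, mul_one_div_cancel hL.ne', one_mul] at h4
      linarith
    have hΔ0 : 0 < f y0 - fstar :=
      (sub_nonneg.2 (hmin y0)).lt_of_ne (Ne.symm (sub_ne_zero.2 hy0))
    have hμL : μ ≤ L := by
      nlinarith [hgb y0, hPL y0, hΔ0]
    have h1γμ : 0 ≤ 1 - γ * μ := by
      nlinarith [mul_nonneg hγ0.le (sub_nonneg.2 hμL)]
    intro k
    induction k with
    | zero =>
      simp only [pow_zero, one_mul]
      have : (∑ ω : Fin 0 → ι, (∏ s, p (ω s)) *
          (f (x 0 (fun m => if h : m < 0 then ω ⟨m, h⟩ else default)) - fstar))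
          = f x0 - fstar := by
        simp [hx0]
      rw [this]
      linarith
    | succ n ih =>
      rw [reindex n]
      beta_reduce
      calc (∑ ω : Fin n → ι, ∑ i : ι, (∏ s : Fin (n + 1), p (Fin.snoc (α := fun _ => ι) ω i s)) *
              (f (x (n + 1) (fun m => if h : m < n + 1 then Fin.snoc (α := fun _ => ι) ω i ⟨m, h⟩ else default))
                - fstar))
          ≤ ∑ ω : Fin n → ι, (∏ s, p (ω s)) *
              ((1 - γ * μ) * (f (x n (fun m => if h : m < n then ω ⟨m, h⟩ else default)) - fstar)
                + L * γ ^ 2 * σ2) := by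
            refine Finset.sum_le_sum fun ω _ => ?_
            have hterm : ∀ i : ι, (∏ s : Fin (n + 1), p (Fin.snoc (α := fun _ => ι) ω i s)) *
                (f (x (n + 1) (fun m => if h : m < n + 1 then Fin.snoc (α := fun _ => ι) ω i ⟨m, h⟩ else default))
                  - fstar)
                = (∏ s, p (ω s)) * (p i *
                  (f (x n (fun m => if h : m < n then ω ⟨m, h⟩ else default)
                      - γ • g i (x n (fun m => if h : m < n then ω ⟨m, h⟩ else default)))
                    - fstar)) := by
              intro i
              rw [hsnoc_prod n ω i, hx_step n ω i]
              ring
            rw [Finset.sum_congr rfl (fun i _ => hterm i), ← Finset.mul_sum]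
            exact mul_le_mul_of_nonneg_left (key _) (Finset.prod_nonneg fun s _ => hp0 _)
        _ = (1 - γ * μ) * (∑ ω : Fin n → ι, (∏ s, p (ω s)) *
              (f (x n (fun m => if h : m < n then ω ⟨m, h⟩ else default)) - fstar))
            + L * γ ^ 2 * σ2 * (∑ ω : Fin n → ι, ∏ s, p (ω s)) := by
            rw [Finset.mul_sum, Finset.mul_sum, ← Finset.sum_add_distrib]
            exact Finset.sum_congr rfl fun ω _ => by ring
        _ ≤ (1 - γ * μ) * ((1 - γ * μ) ^ n * (f x0 - fstar) + L * γ * σ2 / μ)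
            + L * γ ^ 2 * σ2 := by
            rw [hprob n, mul_one]
            exact add_le_add_left (mul_le_mul_of_nonneg_left ih h1γμ) _
        _ = (1 - γ * μ) ^ (n + 1) * (f x0 - fstar) + L * γ * σ2 / μ := by
            field_simp
            ring
end

section
/- Assume f is L-smooth, μ-PL, g satisfies ER(ρ), and interpolation holds (so σ = 0). Then SGD with step size γ = 1/(L(1 + 2ρ/μ)) satisfies E[f(x^k) - f*] ≤ (1 - γμ)^k (f(x^0) - f*), i.e. converges linearly to the exact minimum. -/
open scoped RealInnerProductSpace
open Finset

set_option maxHeartbeats 1600000 in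
/-- Under interpolation (so the gradient noise vanishes: `g(x*) = 0`), SGD on an `L`-smooth
`μ`-PL function satisfying the Expected Residual condition with step size
`γ = 1/(L(1 + 2ρ/μ))` converges linearly: `E[f(x^k) - f*] ≤ (1 - γμ)^k (f(x⁰) - f*)`. -/
theorem sgd_PL_interpolation_linear
    {E : Type*} [NormedAddCommGroup E] [InnerProductSpace ℝ E]
    {ι : Type*} [Fintype ι] [Inhabited ι] (p : ι → ℝ)
    (hp0 : ∀ i, 0 ≤ p i) (hp1 : ∑ i, p i = 1)
    (f : E → ℝ) (gradf : E → E) (g : ι → E → E)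
    (L μ ρ γ fstar : ℝ) (xstar x0 : E)
    (hL : 0 < L) (hμ : 0 < μ) (hρ : 0 ≤ ρ)
    (hsmooth : ∀ x z : E, f z ≤ f x + ⟪gradf x, z - x⟫ + L / 2 * ‖z - x‖ ^ 2)
    (hPL : ∀ x : E, ‖gradf x‖ ^ 2 ≥ 2 * μ * (f x - fstar))
    (hmin : ∀ x, fstar ≤ f x) (hfs : f xstar = fstar) (hgs : gradf xstar = 0)
    (hunbiased : ∀ x : E, ∑ i, p i • g i x = gradf x)
    (hER : ∀ x : E, (∑ i, p i * ‖g i x - g i xstar - (gradf x - gradf xstar)‖ ^ 2) ≤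
        2 * ρ * (f x - fstar))
    (hinterp : ∀ i, g i xstar = 0)
    (hγ : γ = 1 / (L * (1 + 2 * ρ / μ)))
    (x : ℕ → (ℕ → ι) → E)
    (hx0 : ∀ ω, x 0 ω = x0)
    (hrec : ∀ k ω, x (k + 1) ω = x k ω - γ • g (ω k) (x k ω)) :
    ∀ k : ℕ,
      (∑ ω : Fin k → ι, (∏ s, p (ω s)) *
          (f (x k (fun m => if h : m < k then ω ⟨m, h⟩ else default)) - fstar)) ≤
        (1 - γ * μ) ^ k * (f x0 - fstar) := by
  -- basic facts about γ
  have hc : 0 < L * (1 + 2 * ρ / μ) := by positivity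
  have hγ0 : 0 < γ := by rw [hγ]; positivity
  have hLγ : L * γ ≤ 1 := by
    rw [hγ, mul_one_div, div_le_one hc]
    nlinarith [mul_nonneg hL.le (div_nonneg (by linarith : (0:ℝ) ≤ 2*ρ) hμ.le)]
  have hγnn : 0 ≤ γ := hγ0.le
  have hkey : L * γ * (μ + 2 * ρ) = μ := by
    rw [hγ]; field_simp
  -- one-step expected decrease
  have onestep : ∀ y : E,
      (∑ i, p i * (f (y - γ • g i y) - fstar)) ≤ (1 - γ * μ) * (f y - fstar) := by
    intro y
    set G := gradf y with hG
    have hD0 : 0 ≤ f y - fstar := by linarith [hmin y]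
    -- weighted mean of stochastic gradients
    have hmean : ∑ i, p i * ⟪G, g i y⟫ = ‖G‖ ^ 2 := by
      have : ⟪G, ∑ i, p i • g i y⟫ = ∑ i, p i * ⟪G, g i y⟫ := by
        rw [inner_sum]
        exact Finset.sum_congr rfl fun i _ => real_inner_smul_right _ _ _
      rw [← this, hunbiased y, ← hG, real_inner_self_eq_norm_sq]
    -- variance decomposition
    have hvar : ∑ i, p i * ‖g i y‖ ^ 2
        = (∑ i, p i * ‖g i y - G‖ ^ 2) + ‖G‖ ^ 2 := by
      have hcross : ∑ i, p i * ⟪g i y - G, G⟫ = 0 := by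
        have h1 : ∑ i, p i * ⟪g i y - G, G⟫
            = ⟪∑ i, p i • (g i y - G), G⟫ := by
          rw [sum_inner]
          exact (Finset.sum_congr rfl fun i _ => (real_inner_smul_left _ _ _).symm)
        have h2 : ∑ i, p i • (g i y - G) = 0 := by
          simp only [smul_sub]
          rw [Finset.sum_sub_distrib, hunbiased y, ← Finset.sum_smul, hp1, one_smul, ← hG,
            sub_self]
        rw [h1, h2, inner_zero_left]
      have hpt : ∀ i, ‖g i y‖ ^ 2 = ‖g i y - G‖ ^ 2 + 2 * ⟪g i y - G, G⟫ + ‖G‖ ^ 2 := by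
        intro i
        have := norm_add_sq_real (g i y - G) G
        simpa using this
      calc ∑ i, p i * ‖g i y‖ ^ 2
          = ∑ i, (p i * ‖g i y - G‖ ^ 2 + (2 * (p i * ⟪g i y - G, G⟫) + p i * ‖G‖ ^ 2)) := by
            refine Finset.sum_congr rfl fun i _ => ?_
            rw [hpt i]; ring
        _ = (∑ i, p i * ‖g i y - G‖ ^ 2) + ‖G‖ ^ 2 := by
            rw [Finset.sum_add_distrib, Finset.sum_add_distrib, ← Finset.mul_sum, hcross,
              ← Finset.sum_mul, hp1]
            ring
    -- expected residual bound
    have hERy : ∑ i, p i * ‖g i y - G‖ ^ 2 ≤ 2 * ρ * (f y - fstar) := by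
      have := hER y
      simpa [hinterp, hgs, hG] using this
    -- smoothness applied pointwise
    have hsm : ∀ i, f (y - γ • g i y)
        ≤ f y - γ * ⟪G, g i y⟫ + L / 2 * γ ^ 2 * ‖g i y‖ ^ 2 := by
      intro i
      have := hsmooth y (y - γ • g i y)
      have h1 : y - γ • g i y - y = -(γ • g i y) := by abel
      rw [h1, inner_neg_right, real_inner_smul_right, norm_neg, norm_smul,
        Real.norm_eq_abs, abs_of_nonneg hγnn, mul_pow] at this
      linarith [this]
    -- take expectation
    have hexp : ∑ i, p i * f (y - γ • g i y)
        ≤ f y - γ * ‖G‖ ^ 2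
          + L / 2 * γ ^ 2 * ((∑ i, p i * ‖g i y - G‖ ^ 2) + ‖G‖ ^ 2) := by
      calc ∑ i, p i * f (y - γ • g i y)
          ≤ ∑ i, p i * (f y - γ * ⟪G, g i y⟫ + L / 2 * γ ^ 2 * ‖g i y‖ ^ 2) := by
            exact Finset.sum_le_sum fun i _ => mul_le_mul_of_nonneg_left (hsm i) (hp0 i)
        _ = ∑ i, (p i * f y - γ * (p i * ⟪G, g i y⟫)
              + L / 2 * γ ^ 2 * (p i * ‖g i y‖ ^ 2)) :=
            Finset.sum_congr rfl fun i _ => by ring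
        _ = (∑ i, p i) * f y - γ * ∑ i, p i * ⟪G, g i y⟫
              + L / 2 * γ ^ 2 * ∑ i, p i * ‖g i y‖ ^ 2 := by
            rw [Finset.sum_add_distrib, Finset.sum_sub_distrib, ← Finset.sum_mul,
              ← Finset.mul_sum, ← Finset.mul_sum]
        _ = f y - γ * ‖G‖ ^ 2 + L / 2 * γ ^ 2 *
              ((∑ i, p i * ‖g i y - G‖ ^ 2) + ‖G‖ ^ 2) := by
            rw [hp1, hmean, hvar]; ring
    have hlhs : ∑ i, p i * (f (y - γ • g i y) - fstar)
        = (∑ i, p i * f (y - γ • g i y)) - fstar := by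
      simp only [mul_sub, Finset.sum_sub_distrib, ← Finset.sum_mul, hp1, one_mul]
    rw [hlhs]
    have hPLy := hPL y
    rw [← hG] at hPLy
    have hcoef : 0 ≤ γ - L / 2 * γ ^ 2 := by nlinarith
    have h1 := mul_le_mul_of_nonneg_left hERy (by positivity : (0:ℝ) ≤ L / 2 * γ ^ 2)
    have h2 := mul_le_mul_of_nonneg_left hPLy hcoef
    have hkey3 : γ * μ * (f y - fstar) = L * γ ^ 2 * (μ + 2 * ρ) * (f y - fstar) := by
      rw [show L * γ ^ 2 * (μ + 2 * ρ) = γ * (L * γ * (μ + 2 * ρ)) by ring, hkey]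
    have hnn : 0 ≤ L * γ ^ 2 * ρ * (f y - fstar) :=
      mul_nonneg (mul_nonneg (mul_nonneg hL.le (sq_nonneg γ)) hρ) hD0
    nlinarith [h1, h2, hexp, hkey3, hnn]
  -- x k ω depends only on ω below k
  have hxdep : ∀ k (ω ω' : ℕ → ι), (∀ m, m < k → ω m = ω' m) → x k ω = x k ω' := by
    intro k
    induction k with
    | zero => intro ω ω' _; rw [hx0, hx0]
    | succ n ih =>
      intro ω ω' h
      have h1 : x n ω = x n ω' := ih ω ω' fun m hm => h m (hm.trans (Nat.lt_succ_self n))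
      rw [hrec, hrec, h1, h n (Nat.lt_succ_self n)]
  intro k
  induction k with
  | zero =>
    simp [hx0]
  | succ k ih =>
    have hstep :
        (∑ ω : Fin (k+1) → ι, (∏ s, p (ω s)) *
            (f (x (k+1) (fun m => if h : m < k+1 then ω ⟨m, h⟩ else default)) - fstar))
        ≤ (1 - γ * μ) *
          (∑ ω : Fin k → ι, (∏ s, p (ω s)) *
            (f (x k (fun m => if h : m < k then ω ⟨m, h⟩ else default)) - fstar)) := by
      rw [← Fintype.sum_equiv (Fin.snocEquiv (fun _ => ι))
        (fun q => (∏ s, p ((Fin.snocEquiv (fun _ => ι)) q s)) *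
          (f (x (k+1) (fun m => if h : m < k+1 then (Fin.snocEquiv (fun _ => ι)) q ⟨m, h⟩ else default)) - fstar))
        _ (fun q => rfl)]
      rw [Fintype.sum_prod_type_right]
      rw [Finset.mul_sum]
      refine Finset.sum_le_sum fun ω _ => ?_
      -- for fixed ω : Fin k → ι, sum over last index i
      set y := x k (fun m => if h : m < k then ω ⟨m, h⟩ else default) with hy
      have hval : ∀ i : ι,
          x (k+1) (fun m => if h : m < k+1 then Fin.snocEquiv (fun _ => ι) (i, ω) ⟨m, h⟩ else default)
            = y - γ • g i y := by
        intro i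
        set ω' : ℕ → ι := fun m => if h : m < k+1 then Fin.snocEquiv (fun _ => ι) (i, ω) ⟨m, h⟩ else default with hω'
        have hωk : ω' k = i := by
          simp only [hω', dif_pos (Nat.lt_succ_self k)]
          exact Fin.snoc_last (α := fun _ => ι) ..
        have hxk : x k ω' = y := by
          rw [hy]
          refine hxdep k _ _ fun m hm => ?_
          simp only [hω', dif_pos (hm.trans (Nat.lt_succ_self k)), dif_pos hm]
          exact Fin.snoc_castSucc (α := fun _ => ι) (i := ⟨m, hm⟩) ..
        rw [hrec k ω', hωk, hxk]
      have hprod : ∀ i : ι,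
          (∏ s : Fin (k+1), p (Fin.snocEquiv (fun _ => ι) (i, ω) s)) = (∏ s, p (ω s)) * p i := by
        intro i
        show (∏ s : Fin (k+1), p (Fin.snoc (α := fun _ => ι) ω i s)) = _
        rw [Fin.prod_univ_castSucc]
        simp [Fin.snoc_castSucc, Fin.snoc_last]
      calc (∑ i, (∏ s : Fin (k+1), p (Fin.snocEquiv (fun _ => ι) (i, ω) s)) *
              (f (x (k+1) (fun m => if h : m < k+1 then Fin.snocEquiv (fun _ => ι) (i, ω) ⟨m, h⟩ else default)) - fstar))
          = (∏ s, p (ω s)) * ∑ i, p i * (f (y - γ • g i y) - fstar) := by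
            rw [Finset.mul_sum]
            refine Finset.sum_congr rfl fun i _ => ?_
            rw [hprod i, hval i]; ring
        _ ≤ (∏ s, p (ω s)) * ((1 - γ * μ) * (f y - fstar)) := by
            refine mul_le_mul_of_nonneg_left (onestep y) ?_
            exact Finset.prod_nonneg fun s _ => hp0 _
        _ = (1 - γ * μ) * ((∏ s, p (ω s)) * (f y - fstar)) := by ring
    -- need 1 - γμ ≥ 0 unless everything is trivial
    by_cases htriv : ∀ z : E, f z = fstar
    · have hz : ∀ ω : Fin (k+1) → ι, (∏ s, p (ω s)) *
          (f (x (k+1) (fun m => if h : m < k+1 then ω ⟨m, h⟩ else default)) - fstar) = 0 := by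
        intro ω; rw [htriv]; ring
      rw [Finset.sum_congr rfl fun ω _ => hz ω, Finset.sum_const, smul_zero, htriv x0]
      simp
    · push_neg at htriv
      obtain ⟨z, hz⟩ := htriv
      have hzpos : 0 < f z - fstar := by
        rcases lt_or_eq_of_le (hmin z) with h | h
        · linarith
        · exact absurd h.symm hz
      -- μ ≤ L
      have hμL : μ ≤ L := by
        have h1 : f (z - (1/L) • gradf z) ≤ f z - 1/(2*L) * ‖gradf z‖ ^ 2 := by
          have := hsmooth z (z - (1/L) • gradf z)
          have h2 : z - (1/L) • gradf z - z = -((1/L) • gradf z) := by abel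
          rw [h2, inner_neg_right, real_inner_smul_right, norm_neg, norm_smul,
            Real.norm_eq_abs, abs_of_nonneg (by positivity : (0:ℝ) ≤ 1/L), mul_pow,
            real_inner_self_eq_norm_sq] at this
          have hL2 : L / 2 * ((1/L)^2 * ‖gradf z‖^2) = 1/(2*L) * ‖gradf z‖^2 := by
            field_simp
          have hinv : 1/L * ‖gradf z‖^2 = 2 * (1/(2*L) * ‖gradf z‖^2) := by
            field_simp
          rw [hL2] at this
          linarith [this, hinv]
        have h3 : ‖gradf z‖ ^ 2 ≤ 2 * L * (f z - fstar) := by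
          have h4 : 1/(2*L) * ‖gradf z‖^2 ≤ f z - fstar := by
            linarith [hmin (z - (1/L) • gradf z)]
          have hLpos : (0:ℝ) < 2 * L := by linarith
          have h5 : 2*L*(1/(2*L) * ‖gradf z‖^2) = ‖gradf z‖^2 := by field_simp
          have h6 := mul_le_mul_of_nonneg_left h4 hLpos.le
          linarith [h5, h6]
        nlinarith [hPL z, h3, hzpos]
      have h1γμ : 0 ≤ 1 - γ * μ := by
        have h2 : μ ≤ L * (1 + 2 * ρ / μ) := by
          have h3 : 0 ≤ L * (2 * ρ / μ) := by positivity
          nlinarith [h3, hμL]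
        have h4 : γ * μ ≤ 1 := by
          rw [hγ, div_mul_eq_mul_div, one_mul, div_le_one hc]
          exact h2
        linarith
      calc _ ≤ (1 - γ * μ) *
          (∑ ω : Fin k → ι, (∏ s, p (ω s)) *
            (f (x k (fun m => if h : m < k then ω ⟨m, h⟩ else default)) - fstar)) := hstep
        _ ≤ (1 - γ * μ) * ((1 - γ * μ) ^ k * (f x0 - fstar)) :=
            mul_le_mul_of_nonneg_left ih h1γμ
        _ = (1 - γ * μ) ^ (k+1) * (f x0 - fstar) := by ring
end

section
/- Assume f is (ζ, λ)-quasar-strongly convex with respect to x* and g satisfies ER(ρ) with noise σ². Then SGD with constant step size γ ∈ (0, ζ/(2ρ + L)] satisfies E‖x^k - x*‖² ≤ (1 - γζλ)^k ‖x^0 - x*‖² + 2γσ²/(ζλ). -/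
open scoped RealInnerProductSpace
open Finset

private lemma norm_add_add_sq_le {E : Type*} [NormedAddCommGroup E] [InnerProductSpace ℝ E]
    (a b c : E) :
    ‖a + b + c‖ ^ 2 ≤ 2 * ‖a‖ ^ 2 + 2 * ‖b‖ ^ 2 + ‖c‖ ^ 2 + 2 * ⟪a, c⟫ + 2 * ⟪b, c⟫ := by
  have h1 : ‖a + b + c‖ ^ 2 = ‖a + b‖ ^ 2 + 2 * ⟪a + b, c⟫ + ‖c‖ ^ 2 :=
    norm_add_sq_real (a + b) c
  have h2 : ‖a + b‖ ^ 2 = ‖a‖ ^ 2 + 2 * ⟪a, b⟫ + ‖b‖ ^ 2 := norm_add_sq_real a b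
  have h4 : ‖a - b‖ ^ 2 = ‖a‖ ^ 2 - 2 * ⟪a, b⟫ + ‖b‖ ^ 2 := norm_sub_sq_real a b
  have h3 : (0:ℝ) ≤ ‖a - b‖ ^ 2 := sq_nonneg _
  have h5 : ⟪a + b, c⟫ = ⟪a, c⟫ + ⟪b, c⟫ := inner_add_left a b c
  linarith

private lemma grad_sq_le_aux {E : Type*} [NormedAddCommGroup E] [InnerProductSpace ℝ E]
    (f : E → ℝ) (gradf : E → E) (L fstar : ℝ) (hL : 0 < L)
    (hsmooth : ∀ x z : E, f z ≤ f x + ⟪gradf x, z - x⟫ + L / 2 * ‖z - x‖ ^ 2)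
    (hmin : ∀ z, fstar ≤ f z) (y : E) :
    ‖gradf y‖ ^ 2 ≤ 2 * L * (f y - fstar) := by
  have h1 := hsmooth y (y - (1 / L) • gradf y)
  have h2 := hmin (y - (1 / L) • gradf y)
  have e1 : y - (1 / L) • gradf y - y = -((1 / L) • gradf y) := by abel
  rw [e1, inner_neg_right, real_inner_smul_right, real_inner_self_eq_norm_sq, norm_neg,
    norm_smul] at h1
  have hL1 : ‖(1:ℝ) / L‖ = 1 / L := Real.norm_of_nonneg (by positivity)
  rw [hL1] at h1
  have key : fstar ≤ f y - 1 / (2 * L) * ‖gradf y‖ ^ 2 := by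
    have heq : f y + -(1 / L * ‖gradf y‖ ^ 2) + L / 2 * (1 / L * ‖gradf y‖) ^ 2
        = f y - 1 / (2 * L) * ‖gradf y‖ ^ 2 := by
      field_simp
      ring
    linarith
  calc ‖gradf y‖ ^ 2 = 2 * L * (1 / (2 * L) * ‖gradf y‖ ^ 2) := by field_simp
    _ ≤ 2 * L * (f y - fstar) := by
        apply mul_le_mul_of_nonneg_left (by linarith) (by linarith)

set_option maxHeartbeats 1000000 in
/-- SGD on an `L`-smooth, `(ζ,λ)`-quasar-strongly convex function under the Expected
Residual condition, with constant step size `γ ∈ (0, ζ/(2ρ + L)]`: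
`E‖x^k - x*‖² ≤ (1 - γζλ)^k ‖x⁰ - x*‖² + 2γσ²/(ζλ)`. -/
theorem sgd_quasar_strongly_convex
    {E : Type*} [NormedAddCommGroup E] [InnerProductSpace ℝ E]
    {ι : Type*} [Fintype ι] [Inhabited ι] (p : ι → ℝ)
    (hp0 : ∀ i, 0 ≤ p i) (hp1 : ∑ i, p i = 1)
    (f : E → ℝ) (gradf : E → E) (g : ι → E → E)
    (L ζ lam ρ σ2 γ : ℝ) (xstar x0 : E)
    (hL : 0 < L) (hζ0 : 0 < ζ) (hζ1 : ζ ≤ 1) (hlam : 0 < lam) (hρ : 0 ≤ ρ)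
    (hsmooth : ∀ x z : E, f z ≤ f x + ⟪gradf x, z - x⟫ + L / 2 * ‖z - x‖ ^ 2)
    (hquasar : ∀ x : E,
        f xstar ≥ f x + (1 / ζ) * ⟪gradf x, xstar - x⟫ + lam / 2 * ‖xstar - x‖ ^ 2)
    (hmin : ∀ x, f xstar ≤ f x)
    (hunbiased : ∀ x : E, ∑ i, p i • g i x = gradf x)
    (hER : ∀ x : E, (∑ i, p i * ‖g i x - g i xstar - (gradf x - gradf xstar)‖ ^ 2) ≤
        2 * ρ * (f x - f xstar))
    (hσ : (∑ i, p i * ‖g i xstar‖ ^ 2) = σ2)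
    (hγ0 : 0 < γ) (hγ : γ ≤ ζ / (2 * ρ + L))
    (x : ℕ → (ℕ → ι) → E)
    (hx0 : ∀ ω, x 0 ω = x0)
    (hrec : ∀ k ω, x (k + 1) ω = x k ω - γ • g (ω k) (x k ω)) :
    ∀ k : ℕ,
      (∑ ω : Fin k → ι, (∏ s, p (ω s)) *
          ‖x k (fun m => if h : m < k then ω ⟨m, h⟩ else default) - xstar‖ ^ 2) ≤
        (1 - γ * ζ * lam) ^ k * ‖x0 - xstar‖ ^ 2 + 2 * γ * σ2 / (ζ * lam) := by
  -- basic facts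
  have hρL : (0:ℝ) < 2 * ρ + L := by linarith
  have hγρL : γ * (2 * ρ + L) ≤ ζ := by
    rw [le_div_iff₀ hρL] at hγ; exact hγ
  have hσ2 : 0 ≤ σ2 := by
    rw [← hσ]; exact Finset.sum_nonneg fun i _ => mul_nonneg (hp0 i) (sq_nonneg _)
  have hgap : ∀ y, 0 ≤ f y - f xstar := fun y => sub_nonneg.mpr (hmin y)
  have hgradsq : ∀ y, ‖gradf y‖ ^ 2 ≤ 2 * L * (f y - f xstar) :=
    grad_sq_le_aux f gradf L (f xstar) hL hsmooth hmin
  have hgrad0 : gradf xstar = 0 := by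
    have h := hgradsq xstar
    have h2 : ‖gradf xstar‖ ^ 2 = 0 := le_antisymm (by linarith) (sq_nonneg _)
    have h3 : ‖gradf xstar‖ = 0 := by
      exact pow_eq_zero_iff (two_ne_zero) |>.mp h2
    exact norm_eq_zero.mp h3
  have hCnonneg : 0 ≤ 2 * γ * σ2 / (ζ * lam) := by
    apply div_nonneg (by nlinarith) (by positivity)
  -- second moment bound
  have hS2 : ∀ y : E, (∑ i, p i * ‖g i y‖ ^ 2) ≤ (4 * ρ + 2 * L) * (f y - f xstar) + 2 * σ2 := by
    intro y
    set c : E := gradf y - gradf xstar with hc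
    set a : ι → E := fun i => g i y - g i xstar - (gradf y - gradf xstar) with ha
    have hay : ∑ i, p i • a i = 0 := by
      simp only [ha, smul_sub, Finset.sum_sub_distrib, hunbiased, ← Finset.sum_smul, hp1,
        one_smul]
      abel
    have hby : ∑ i, p i • g i xstar = 0 := by rw [hunbiased, hgrad0]
    have hac : ∑ i, p i * ⟪a i, c⟫ = 0 := by
      simp_rw [← real_inner_smul_left]
      rw [← sum_inner, hay, inner_zero_left]
    have hbc : ∑ i, p i * ⟪g i xstar, c⟫ = 0 := by
      simp_rw [← real_inner_smul_left]
      rw [← sum_inner, hby, inner_zero_left]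
    have hgi : ∀ i, g i y = a i + g i xstar + c := by
      intro i; simp only [ha, hc]; abel
    have hcsq : ‖c‖ ^ 2 ≤ 2 * L * (f y - f xstar) := by
      rw [hc, hgrad0, sub_zero]; exact hgradsq y
    have hERy := hER y
    calc (∑ i, p i * ‖g i y‖ ^ 2)
        ≤ ∑ i, p i * (2 * ‖a i‖ ^ 2 + 2 * ‖g i xstar‖ ^ 2 + ‖c‖ ^ 2 + 2 * ⟪a i, c⟫
            + 2 * ⟪g i xstar, c⟫) := by
          apply Finset.sum_le_sum
          intro i _
          apply mul_le_mul_of_nonneg_left _ (hp0 i)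
          rw [hgi i]
          exact norm_add_add_sq_le (a i) (g i xstar) c
      _ = 2 * (∑ i, p i * ‖a i‖ ^ 2) + 2 * (∑ i, p i * ‖g i xstar‖ ^ 2)
            + ‖c‖ ^ 2 * (∑ i, p i) + 2 * (∑ i, p i * ⟪a i, c⟫)
            + 2 * (∑ i, p i * ⟪g i xstar, c⟫) := by
          simp only [Finset.mul_sum, ← Finset.sum_add_distrib]
          apply Finset.sum_congr rfl
          intro i _
          ring
      _ ≤ (4 * ρ + 2 * L) * (f y - f xstar) + 2 * σ2 := by
          rw [hp1, hac, hbc, hσ]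
          have h1 : ∑ i, p i * ‖a i‖ ^ 2 ≤ 2 * ρ * (f y - f xstar) := hERy
          nlinarith [hgap y]
  -- one-step inequality
  have hstep : ∀ y : E, (∑ i, p i * ‖y - γ • g i y - xstar‖ ^ 2) ≤
      (1 - γ * ζ * lam) * ‖y - xstar‖ ^ 2 + 2 * γ ^ 2 * σ2 := by
    intro y
    have hexp : ∀ i, ‖y - γ • g i y - xstar‖ ^ 2 =
        ‖y - xstar‖ ^ 2 - 2 * γ * ⟪g i y, y - xstar⟫ + γ ^ 2 * ‖g i y‖ ^ 2 := by
      intro i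
      have e : y - γ • g i y - xstar = (y - xstar) - γ • g i y := by abel
      rw [e, norm_sub_sq_real, real_inner_smul_right, norm_smul, mul_pow,
        Real.norm_eq_abs, sq_abs, real_inner_comm]
      ring
    have h1 : ∑ i, p i * ⟪g i y, y - xstar⟫ = ⟪gradf y, y - xstar⟫ := by
      simp_rw [← real_inner_smul_left]
      rw [← sum_inner, hunbiased]
    have hsum : (∑ i, p i * ‖y - γ • g i y - xstar‖ ^ 2) =
        ‖y - xstar‖ ^ 2 - 2 * γ * ⟪gradf y, y - xstar⟫
          + γ ^ 2 * (∑ i, p i * ‖g i y‖ ^ 2) := by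
      calc (∑ i, p i * ‖y - γ • g i y - xstar‖ ^ 2)
          = ∑ i, (‖y - xstar‖ ^ 2 * p i - 2 * γ * (p i * ⟪g i y, y - xstar⟫)
              + γ ^ 2 * (p i * ‖g i y‖ ^ 2)) := by
            apply Finset.sum_congr rfl
            intro i _
            rw [hexp i]
            ring
        _ = ‖y - xstar‖ ^ 2 * (∑ i, p i) - 2 * γ * (∑ i, p i * ⟪g i y, y - xstar⟫)
              + γ ^ 2 * (∑ i, p i * ‖g i y‖ ^ 2) := by
            rw [Finset.sum_add_distrib, Finset.sum_sub_distrib, ← Finset.mul_sum,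
              ← Finset.mul_sum, ← Finset.mul_sum]
        _ = _ := by rw [hp1, h1, mul_one]
    rw [hsum]
    have hq := hquasar y
    have hinner : ζ * (f y - f xstar) + ζ * lam / 2 * ‖y - xstar‖ ^ 2
        ≤ ⟪gradf y, y - xstar⟫ := by
      have hsymv : xstar - y = -(y - xstar) := by abel
      rw [hsymv, inner_neg_right, norm_neg] at hq
      have h2 : f y - f xstar + lam / 2 * ‖y - xstar‖ ^ 2
          ≤ (1 / ζ) * ⟪gradf y, y - xstar⟫ := by nlinarith
      calc ζ * (f y - f xstar) + ζ * lam / 2 * ‖y - xstar‖ ^ 2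
          = ζ * (f y - f xstar + lam / 2 * ‖y - xstar‖ ^ 2) := by ring
        _ ≤ ζ * ((1 / ζ) * ⟪gradf y, y - xstar⟫) :=
            mul_le_mul_of_nonneg_left h2 hζ0.le
        _ = ⟪gradf y, y - xstar⟫ := by field_simp
    have hS := hS2 y
    nlinarith [mul_le_mul_of_nonneg_left hinner (by positivity : (0:ℝ) ≤ 2 * γ),
      mul_le_mul_of_nonneg_left hS (by positivity : (0:ℝ) ≤ γ ^ 2),
      mul_nonneg (mul_nonneg hγ0.le (hgap y))
        (by linarith : (0:ℝ) ≤ ζ - γ * (2 * ρ + L)),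
      hgap y, hγ0]
  -- dependence on finitely many coordinates
  have hdep : ∀ (k : ℕ) (ω ω' : ℕ → ι), (∀ m, m < k → ω m = ω' m) → x k ω = x k ω' := by
    intro k
    induction k with
    | zero => intro ω ω' _; rw [hx0, hx0]
    | succ n ih =>
      intro ω ω' h
      rw [hrec, hrec, ih ω ω' fun m hm => h m (Nat.lt_succ_of_lt hm),
        h n (Nat.lt_succ_self n)]
  -- splitting the sum over the last step
  have hprod : ∀ (k : ℕ) (i : ι) (ω : Fin k → ι),
      (∏ s, p ((Fin.snoc ω i : Fin (k+1) → ι) s)) = (∏ s, p (ω s)) * p i := by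
    intro k i ω
    have h : (fun s => p ((Fin.snoc ω i : Fin (k+1) → ι) s))
        = Fin.snoc (fun s => p (ω s)) (p i) := (Fin.comp_snoc p ω i)
    rw [h, Fin.prod_snoc]
  have hsplit : ∀ (k : ℕ) (F : (ℕ → ι) → ℝ),
      (∑ ω : Fin (k+1) → ι, (∏ s, p (ω s)) *
          F (fun m => if h : m < k+1 then ω ⟨m, h⟩ else default))
      = ∑ ω : Fin k → ι, ∑ i : ι, ((∏ s, p (ω s)) * p i) *
          F (fun m => if h : m < k+1 then (Fin.snoc ω i : Fin (k+1) → ι) ⟨m, h⟩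
              else default) := by
    intro k F
    rw [← Equiv.sum_comp (Fin.snocEquiv fun _ => ι), Fintype.sum_prod_type, Finset.sum_comm]
    apply Finset.sum_congr rfl
    intro ω _
    apply Finset.sum_congr rfl
    intro i _
    simp only [Fin.snocEquiv_apply]
    rw [hprod k i ω]
  have hW : ∀ k : ℕ, (∑ ω : Fin k → ι, ∏ s, p (ω s)) = 1 := by
    intro k
    induction k with
    | zero => simp
    | succ n ih =>
      rw [← Equiv.sum_comp (Fin.snocEquiv fun _ => ι), Fintype.sum_prod_type]
      calc (∑ i : ι, ∑ ω : Fin n → ι, ∏ s, p ((Fin.snocEquiv fun _ => ι) (i, ω) s))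
          = ∑ i : ι, (∑ ω : Fin n → ι, ∏ s, p (ω s)) * p i := by
            apply Finset.sum_congr rfl
            intro i _
            rw [Finset.sum_mul]
            apply Finset.sum_congr rfl
            intro ω _
            simp only [Fin.snocEquiv_apply]
            exact hprod n i ω
        _ = 1 := by rw [ih]; simp [hp1]
  -- the one-step update along a snoc
  have hsnocx : ∀ (n : ℕ) (ω : Fin n → ι) (i : ι),
      x (n+1) (fun m => if h : m < n+1 then (Fin.snoc ω i : Fin (n+1) → ι) ⟨m, h⟩
          else default)
      = x n (fun m => if h : m < n then ω ⟨m, h⟩ else default)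
        - γ • g i (x n (fun m => if h : m < n then ω ⟨m, h⟩ else default)) := by
    intro n ω i
    rw [hrec]
    have h1 : (if h : n < n+1 then (Fin.snoc ω i : Fin (n+1) → ι) ⟨n, h⟩
        else default) = i := by
      rw [dif_pos (Nat.lt_succ_self n)]
      show (Fin.snoc ω i : Fin (n+1) → ι) (Fin.last n) = i
      simp
    have h2 : x n (fun m => if h : m < n+1 then (Fin.snoc ω i : Fin (n+1) → ι) ⟨m, h⟩
        else default) = x n (fun m => if h : m < n then ω ⟨m, h⟩ else default) := by
      apply hdep
      intro m hm
      simp only [dif_pos (Nat.lt_succ_of_lt hm), dif_pos hm]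
      simp [Fin.snoc, hm]
    rw [h1, h2]
  -- degenerate case
  rcases subsingleton_or_nontrivial E with hE | hE
  · intro k
    have h0 : ∀ a : E, ‖a‖ = 0 := fun a => by rw [Subsingleton.elim a 0, norm_zero]
    simp only [h0]
    simp only [ne_eq, OfNat.ofNat_ne_zero, not_false_eq_true, zero_pow, mul_zero,
      Finset.sum_const_zero]
    nlinarith [hCnonneg]
  -- nondegenerate case: 1 - γζλ ≥ 0
  obtain ⟨v, hv⟩ := exists_ne (0 : E)
  have hvn : (0:ℝ) < ‖v‖ := norm_pos_iff.mpr hv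
  have hD : (0:ℝ) < ‖v‖ ^ 2 := by positivity
  have hzl : ζ * lam ≤ (2 - ζ) * L := by
    have hq := hquasar (xstar + v)
    have hs1 := hsmooth (xstar + v) xstar
    have hs2 := hsmooth xstar (xstar + v)
    have hz1 : xstar + v - xstar = v := add_sub_cancel_left xstar v
    have hz2 : xstar - (xstar + v) = -v := by abel
    rw [hz2, inner_neg_right, norm_neg] at hq hs1
    rw [hz1, hgrad0, inner_zero_left] at hs2
    have hΔ := hgap (xstar + v)
    -- hq :  f* ≥ f z - (1/ζ) I + lam/2 D,  hs1 : f* ≤ f z - I + L/2 D,  hs2 : f z ≤ f* + 0 + L/2 D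
    have hI : ζ * (f (xstar + v) - f xstar) + ζ * lam / 2 * ‖v‖ ^ 2
        ≤ ⟪gradf (xstar + v), v⟫ := by
      have h2 : f (xstar + v) - f xstar + lam / 2 * ‖v‖ ^ 2
          ≤ (1 / ζ) * ⟪gradf (xstar + v), v⟫ := by nlinarith
      calc ζ * (f (xstar + v) - f xstar) + ζ * lam / 2 * ‖v‖ ^ 2
          = ζ * (f (xstar + v) - f xstar + lam / 2 * ‖v‖ ^ 2) := by ring
        _ ≤ ζ * ((1 / ζ) * ⟪gradf (xstar + v), v⟫) :=
            mul_le_mul_of_nonneg_left h2 hζ0.le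
        _ = ⟪gradf (xstar + v), v⟫ := by
            rw [← mul_assoc, mul_one_div_cancel hζ0.ne', one_mul]
    nlinarith [hI, hs1, hs2, hΔ, hD, hζ1, hζ0]
  have hA : 0 ≤ 1 - γ * ζ * lam := by
    nlinarith [mul_le_mul_of_nonneg_left hzl hγ0.le, sq_nonneg (1 - ζ),
      mul_nonneg (mul_nonneg hγ0.le hρ) (by linarith : (0:ℝ) ≤ 2 - ζ),
      hγρL, hζ0.le, hζ1, hγ0.le]
  -- main induction
  intro k
  induction k with
  | zero =>
    have h0 : (∑ ω : Fin 0 → ι, (∏ s, p (ω s)) *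
        ‖x 0 (fun m => if h : m < 0 then ω ⟨m, h⟩ else default) - xstar‖ ^ 2)
        = ‖x0 - xstar‖ ^ 2 := by simp [hx0]
    rw [h0, pow_zero, one_mul]
    linarith
  | succ n ih =>
    have hζne : ζ ≠ 0 := hζ0.ne'
    have hlamne : lam ≠ 0 := hlam.ne'
    calc (∑ ω : Fin (n+1) → ι, (∏ s, p (ω s)) *
          ‖x (n+1) (fun m => if h : m < n+1 then ω ⟨m, h⟩ else default) - xstar‖ ^ 2)
        = ∑ ω : Fin n → ι, ∑ i : ι, ((∏ s, p (ω s)) * p i) *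
            ‖x (n+1) (fun m => if h : m < n+1 then (Fin.snoc ω i : Fin (n+1) → ι) ⟨m, h⟩
                else default) - xstar‖ ^ 2 :=
          hsplit n (fun ω' => ‖x (n+1) ω' - xstar‖ ^ 2)
      _ = ∑ ω : Fin n → ι, (∏ s, p (ω s)) * (∑ i : ι, p i *
            ‖x n (fun m => if h : m < n then ω ⟨m, h⟩ else default)
              - γ • g i (x n (fun m => if h : m < n then ω ⟨m, h⟩ else default))
              - xstar‖ ^ 2) := by
          apply Finset.sum_congr rfl
          intro ω _
          rw [Finset.mul_sum]
          apply Finset.sum_congr rfl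
          intro i _
          rw [hsnocx n ω i]
          ring
      _ ≤ ∑ ω : Fin n → ι, (∏ s, p (ω s)) * ((1 - γ * ζ * lam) *
            ‖x n (fun m => if h : m < n then ω ⟨m, h⟩ else default) - xstar‖ ^ 2
            + 2 * γ ^ 2 * σ2) := by
          apply Finset.sum_le_sum
          intro ω _
          exact mul_le_mul_of_nonneg_left (hstep _)
            (Finset.prod_nonneg fun s _ => hp0 _)
      _ = (1 - γ * ζ * lam) * (∑ ω : Fin n → ι, (∏ s, p (ω s)) *
            ‖x n (fun m => if h : m < n then ω ⟨m, h⟩ else default) - xstar‖ ^ 2)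
            + 2 * γ ^ 2 * σ2 * (∑ ω : Fin n → ι, ∏ s, p (ω s)) := by
          rw [Finset.mul_sum, Finset.mul_sum, ← Finset.sum_add_distrib]
          apply Finset.sum_congr rfl
          intro ω _
          ring
      _ ≤ (1 - γ * ζ * lam) * ((1 - γ * ζ * lam) ^ n * ‖x0 - xstar‖ ^ 2
            + 2 * γ * σ2 / (ζ * lam)) + 2 * γ ^ 2 * σ2 * 1 := by
          rw [hW n]
          exact add_le_add (mul_le_mul_of_nonneg_left ih hA) le_rfl
      _ = (1 - γ * ζ * lam) ^ (n+1) * ‖x0 - xstar‖ ^ 2 + 2 * γ * σ2 / (ζ * lam) := by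
          rw [pow_succ]
          field_simp
          ring
end
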